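/- arXiv:1909.04248 — 12 statements merged into one kernel-verified Lean document; each statement's English description precedes it below -/
import Mathlib

section
/- For every A ≥ 0, a > 0, D ≥ 0 and points x, y, u in a real inner product space E satisfying ‖y − u‖ ≤ D and ‖x − u‖ ≤ D, setting x̃ := (A·y + a·x)/(A + a), one has A·‖y − x̃‖² + a·‖u − x̃‖² = (a/(A + a))·( a·‖u − x‖² + A·‖u − y‖² ) ≤ a·D². -/
/-- Lemma 1(b): for `A ≥ 0`, `a > 0`, `D ≥ 0` and points `x, y, u` with
`‖y − u‖ ≤ D` and `‖x − u‖ ≤ D`, setting `x̃ := (A•y + a•x)/(A + a)`, one has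
`A‖y − x̃‖² + a‖u − x̃‖² = (a/(A+a))(a‖u − x‖² + A‖u − y‖²) ≤ a·D²`. -/
theorem stmt0 {E : Type*} [NormedAddCommGroup E] [InnerProductSpace ℝ E]
    (A a D : ℝ) (hA : 0 ≤ A) (ha : 0 < a) (hD : 0 ≤ D)
    (x y u : E) (hyu : ‖y - u‖ ≤ D) (hxu : ‖x - u‖ ≤ D) :
    A * ‖y - (A + a)⁻¹ • (A • y + a • x)‖ ^ 2
        + a * ‖u - (A + a)⁻¹ • (A • y + a • x)‖ ^ 2
      = a / (A + a) * (a * ‖u - x‖ ^ 2 + A * ‖u - y‖ ^ 2)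
    ∧ a / (A + a) * (a * ‖u - x‖ ^ 2 + A * ‖u - y‖ ^ 2) ≤ a * D ^ 2 := by
  have hs : (0:ℝ) < A + a := by linarith
  have hs' : (A + a) ≠ 0 := ne_of_gt hs
  have h1 : y - (A + a)⁻¹ • (A • y + a • x) = (a / (A + a)) • (y - x) := by
    match_scalars <;> field_simp <;> ring
  have h2 : u - (A + a)⁻¹ • (A • y + a • x)
      = (A / (A + a)) • (u - y) + (a / (A + a)) • (u - x) := by
    match_scalars <;> field_simp <;> ring
  have hq : ‖u - x‖ ≤ D := by rwa [norm_sub_rev] at hxu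
  have hp : ‖u - y‖ ≤ D := by rwa [norm_sub_rev] at hyu
  have hq0 : (0:ℝ) ≤ ‖u - x‖ := norm_nonneg _
  have hp0 : (0:ℝ) ≤ ‖u - y‖ := norm_nonneg _
  set p := u - y with hpd
  set q := u - x with hqd
  have hyx : y - x = q - p := by rw [hpd, hqd]; abel
  constructor
  · rw [h1, h2, hyx]
    have e1 : ‖(a / (A + a)) • (q - p)‖ ^ 2 = (a / (A + a))^2 * ‖q - p‖^2 := by
      rw [norm_smul, Real.norm_eq_abs, abs_div, abs_of_pos ha, abs_of_pos hs, mul_pow]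
    have e2 : ‖(A / (A + a)) • p + (a / (A + a)) • q‖ ^ 2
        = ‖(A / (A + a)) • p‖^2 + 2 * inner ℝ ((A / (A + a)) • p) ((a / (A + a)) • q)
          + ‖(a / (A + a)) • q‖^2 := norm_add_sq_real _ _
    have e3 : ‖q - p‖^2 = ‖q‖^2 - 2 * inner ℝ q p + ‖p‖^2 := norm_sub_sq_real _ _
    have e4 : (inner ℝ ((A / (A + a)) • p) ((a / (A + a)) • q) : ℝ)
        = (A / (A + a)) * (a / (A + a)) * inner ℝ p q := by
      rw [real_inner_smul_left, real_inner_smul_right]; ring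
    have e5 : (inner ℝ q p : ℝ) = inner ℝ p q := real_inner_comm _ _
    have e6 : ‖(A / (A + a)) • p‖ ^ 2 = (A / (A + a))^2 * ‖p‖^2 := by
      rw [norm_smul, Real.norm_eq_abs, abs_div, abs_of_nonneg hA, abs_of_pos hs, mul_pow]
    have e7 : ‖(a / (A + a)) • q‖ ^ 2 = (a / (A + a))^2 * ‖q‖^2 := by
      rw [norm_smul, Real.norm_eq_abs, abs_div, abs_of_pos ha, abs_of_pos hs, mul_pow]
    rw [e1, e2, e3, e4, e5, e6, e7]
    field_simp
    ring
  · have h1 : ‖q‖^2 ≤ D^2 := by nlinarith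
    have h2 : ‖p‖^2 ≤ D^2 := by nlinarith
    have key : a * ‖q‖ ^ 2 + A * ‖p‖ ^ 2 ≤ (A + a) * D^2 := by nlinarith
    calc a / (A + a) * (a * ‖q‖ ^ 2 + A * ‖p‖ ^ 2)
        ≤ a / (A + a) * ((A + a) * D^2) := by
          apply mul_le_mul_of_nonneg_left key (le_of_lt (div_pos ha hs))
      _ = a * D^2 := by field_simp
end

section
/- Let s be a convex subset of a real inner product space E, let f : E → ℝ be differentiable with gradient ∇f, let h : E → ℝ be convex on s, let M > 0 and x̃ ∈ s, and suppose y ∈ s minimizes the function u ↦ ⟨∇f(x̃), u − x̃⟩ + h(u) + (M/2)·‖u − x̃‖² over s. Define v := M·(x̃ − y) + ∇f(y) − ∇f(x̃). Then: (i) for every u ∈ s, h(u) ≥ h(y) + ⟨v − ∇f(y), u − y⟩ (i.e., v lies in ∇f(y) plus the subdifferential at y of h restricted to s); and (ii) ‖v‖ ≤ M·‖y − x̃‖ + ‖∇f(y) − ∇f(x̃)‖. -/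
/-- Lemma 1(d): if `y` minimizes `u ↦ ⟨∇f(x̃), u − x̃⟩ + h(u) + (M/2)‖u − x̃‖²`
over the convex set `s`, and `v := M•(x̃ − y) + ∇f(y) − ∇f(x̃)`, then
(i) `h(u) ≥ h(y) + ⟨v − ∇f(y), u − y⟩` for all `u ∈ s`, and
(ii) `‖v‖ ≤ M‖y − x̃‖ + ‖∇f(y) − ∇f(x̃)‖`. -/
theorem stmt2 {E : Type*} [NormedAddCommGroup E] [InnerProductSpace ℝ E]
    (s : Set E) (hs : Convex ℝ s)
    (f : E → ℝ) (f' : E → E) (hf : ∀ z : E, HasFDerivAt f ((innerSL ℝ) (f' z)) z)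
    (h : E → ℝ) (hh : ConvexOn ℝ s h)
    (M : ℝ) (hM : 0 < M) (xt : E) (hxt : xt ∈ s)
    (y : E) (hy : y ∈ s)
    (hmin : ∀ u ∈ s,
      (inner ℝ (f' xt) (y - xt) : ℝ) + h y + M / 2 * ‖y - xt‖ ^ 2
        ≤ (inner ℝ (f' xt) (u - xt) : ℝ) + h u + M / 2 * ‖u - xt‖ ^ 2) :
    (∀ u ∈ s,
      h u ≥ h y +
        (inner ℝ ((M • (xt - y) + f' y - f' xt) - f' y) (u - y) : ℝ)) ∧
    ‖M • (xt - y) + f' y - f' xt‖ ≤ M * ‖y - xt‖ + ‖f' y - f' xt‖ := by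
  constructor
  · intro u hu
    set g := f' xt with hg
    set a : ℝ := h u - h y + inner ℝ g (u - y) + M * inner ℝ (y - xt) (u - y) with ha
    set c : ℝ := M / 2 * ‖u - y‖ ^ 2 with hc
    have hc0 : 0 ≤ c := by positivity
    have key : ∀ t : ℝ, 0 < t → t ≤ 1 → 0 ≤ a + t * c := by
      intro t ht0 ht1
      have hmem : y + t • (u - y) ∈ s := by
        have h2 := hs hy hu (by linarith : (0:ℝ) ≤ 1 - t) ht0.le (by ring)
        have : (1 - t) • y + t • u = y + t • (u - y) := by module
        rwa [this] at h2
      have hmin' := hmin _ hmem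
      have hhu : h (y + t • (u - y)) ≤ (1 - t) * h y + t * h u := by
        have h2 := hh.2 hy hu (by linarith : (0:ℝ) ≤ 1 - t) ht0.le (by ring)
        have : (1 - t) • y + t • u = y + t • (u - y) := by module
        rwa [this] at h2
      have heq : y + t • (u - y) - xt = (y - xt) + t • (u - y) := by abel
      have hexp : ‖y + t • (u - y) - xt‖ ^ 2
          = ‖y - xt‖ ^ 2 + 2 * (t * inner ℝ (y - xt) (u - y)) + t ^ 2 * ‖u - y‖ ^ 2 := by
        rw [heq, norm_add_sq_real, real_inner_smul_right, norm_smul]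
        rw [Real.norm_eq_abs, abs_of_pos ht0]
        ring
      have hlin : (inner ℝ g (y + t • (u - y) - xt) : ℝ)
          = inner ℝ g (y - xt) + t * inner ℝ g (u - y) := by
        rw [heq, inner_add_right, real_inner_smul_right]
      rw [hlin, hexp] at hmin'
      have h1 : 0 ≤ t * (a + t * c) := by
        rw [ha, hc]
        nlinarith [hmin', hhu]
      nlinarith [h1, ht0]
    have ha0 : 0 ≤ a := by
      by_contra hneg
      push_neg at hneg
      rcases eq_or_lt_of_le hc0 with hce | hcp
      · have := key 1 one_pos le_rfl
        rw [← hce] at this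
        linarith
      · have htpos : 0 < min 1 (-a / (2 * c)) := by
          apply lt_min one_pos
          exact div_pos (by linarith) (by linarith)
        have := key _ htpos (min_le_left _ _)
        have hle : min 1 (-a / (2 * c)) * c ≤ (-a / (2 * c)) * c :=
          mul_le_mul_of_nonneg_right (min_le_right _ _) hc0
        have : (-a / (2 * c)) * c = -a / 2 := by field_simp
        nlinarith [min_le_right (1:ℝ) (-a / (2 * c))]
    have hinner : (inner ℝ ((M • (xt - y) + f' y - f' xt) - f' y) (u - y) : ℝ)
        = -(inner ℝ g (u - y) : ℝ) - M * inner ℝ (y - xt) (u - y) := by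
      rw [hg]
      simp [inner_sub_left, inner_add_left, real_inner_smul_left]
      ring
    rw [hinner]
    linarith [ha0]
  · calc ‖M • (xt - y) + f' y - f' xt‖ = ‖M • (xt - y) + (f' y - f' xt)‖ := by
          rw [add_sub_assoc]
      _ ≤ ‖M • (xt - y)‖ + ‖f' y - f' xt‖ := norm_add_le _ _
      _ = M * ‖y - xt‖ + ‖f' y - f' xt‖ := by
          rw [norm_smul, Real.norm_eq_abs, abs_of_pos hM, norm_sub_rev]
end

section
/- Let s be a convex subset of a real inner product space E, let f : E → ℝ be differentiable with gradient ∇f, let h : E → ℝ be convex on s, let M > 0 and x̃ ∈ s, write ℓ_f(u; x̃) := f(x̃) + ⟨∇f(x̃), u − x̃⟩, and suppose y ∈ s minimizes u ↦ ℓ_f(u; x̃) + h(u) + (M/2)·‖u − x̃‖² over s. If moreover f(y) ≤ ℓ_f(y; x̃) + (M/2)·‖y − x̃‖² (i.e., M is a good upper curvature of f at x̃), then f(y) + h(y) ≤ f(x̃) + h(x̃) − (M/2)·‖y − x̃‖². -/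
/-- Lemma 11 (appendix): if `y` minimizes the linearized prox subproblem
`u ↦ ℓ_f(u; x̃) + h(u) + (M/2)‖u − x̃‖²` over the convex set `s` and `M` is a
good upper curvature of `f` at `x̃` (i.e. `f(y) ≤ ℓ_f(y; x̃) + (M/2)‖y − x̃‖²`),
then `φ(y) ≤ φ(x̃) − (M/2)‖y − x̃‖²` where `φ = f + h`. -/
theorem stmt3 {E : Type*} [NormedAddCommGroup E] [InnerProductSpace ℝ E]
    (s : Set E) (hs : Convex ℝ s)
    (f : E → ℝ) (f' : E → E) (hf : ∀ z : E, HasFDerivAt f ((innerSL ℝ) (f' z)) z)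
    (h : E → ℝ) (hh : ConvexOn ℝ s h)
    (M : ℝ) (hM : 0 < M) (xt : E) (hxt : xt ∈ s)
    (y : E) (hy : y ∈ s)
    (hmin : ∀ u ∈ s,
      f xt + (inner ℝ (f' xt) (y - xt) : ℝ) + h y + M / 2 * ‖y - xt‖ ^ 2
        ≤ f xt + (inner ℝ (f' xt) (u - xt) : ℝ) + h u + M / 2 * ‖u - xt‖ ^ 2)
    (hgood : f y ≤ f xt + (inner ℝ (f' xt) (y - xt) : ℝ) + M / 2 * ‖y - xt‖ ^ 2) :
    f y + h y ≤ f xt + h xt - M / 2 * ‖y - xt‖ ^ 2 := by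
  set g : ℝ := (inner ℝ (f' xt) (y - xt) : ℝ) with hg
  set Q : ℝ := ‖y - xt‖ ^ 2 with hQ
  have hQ0 : 0 ≤ Q := by positivity
  -- key: for all t ∈ (0,1], g + h y + M/2*(2-t)*Q ≤ h xt
  have key : ∀ t : ℝ, 0 < t → t ≤ 1 → g + h y + M / 2 * (2 - t) * Q ≤ h xt := by
    intro t ht0 ht1
    have h1t : (0:ℝ) ≤ 1 - t := by linarith
    have hu : (1 - t) • y + t • xt ∈ s := hs hy hxt h1t ht0.le (by ring)
    have hmin' := hmin _ hu
    have hsub : (1 - t) • y + t • xt - xt = (1 - t) • (y - xt) := by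
      module
    rw [hsub] at hmin'
    rw [inner_smul_right] at hmin'
    have hnorm : ‖(1 - t) • (y - xt)‖ ^ 2 = (1 - t) ^ 2 * Q := by
      rw [norm_smul, Real.norm_eq_abs, abs_of_nonneg h1t]; ring
    rw [hnorm] at hmin'
    have hconv : h ((1 - t) • y + t • xt) ≤ (1 - t) * h y + t * h xt :=
      hh.2 hy hxt h1t ht0.le (by ring)
    have : t * g + t * h y + M / 2 * (t * (2 - t)) * Q ≤ t * h xt := by nlinarith
    nlinarith
  have key2 : g + h y + M * Q ≤ h xt := by
    refine le_of_forall_pos_le_add (fun ε hε => ?_)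
    set t : ℝ := min 1 (2 * ε / (M * (Q + 1))) with htdef
    have htpos : 0 < t := lt_min one_pos (by positivity)
    have ht1 : t ≤ 1 := min_le_left _ _
    have ht2 : t ≤ 2 * ε / (M * (Q + 1)) := min_le_right _ _
    have hk := key t htpos ht1
    have hMQ : 0 < M * (Q + 1) := by positivity
    have : t * (M * (Q + 1)) ≤ 2 * ε := by
      calc t * (M * (Q + 1)) ≤ (2 * ε / (M * (Q + 1))) * (M * (Q + 1)) := by
            exact mul_le_mul_of_nonneg_right ht2 hMQ.le
        _ = 2 * ε := by field_simp
    nlinarith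
  nlinarith
end

section
/- Let α > 0, μ > 0, and let C : ℕ → ℝ be a sequence with C_j ≥ 0 for all j. Define C^avg_k := (1/(k+1))·∑_{j=0}^{k} C_j, M_0 := μ, and M_k := max{ C^avg_{k−1}/α, μ } for k ≥ 1. Then for all integers i, k with 1 ≤ i < k, one has M_k ≥ (i/k)·M_i. -/
/-- Lemma 6: for the modified average curvature sequence
`M_0 = μ`, `M_k = max{C^avg_{k−1}/α, μ}` built from a nonnegative sequence `C`
with running averages `C^avg_k = (1/(k+1))·∑_{j=0}^k C_j`, one has
`M_k ≥ (i/k)·M_i` for all `1 ≤ i < k`. -/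
theorem stmt4 (α μ : ℝ) (hα : 0 < α) (hμ : 0 < μ)
    (C : ℕ → ℝ) (hC : ∀ j, 0 ≤ C j)
    (Cavg : ℕ → ℝ)
    (hCavg : ∀ k, Cavg k = (1 / ((k : ℝ) + 1)) * ∑ j ∈ Finset.range (k + 1), C j)
    (M : ℕ → ℝ) (hM0 : M 0 = μ)
    (hMk : ∀ k : ℕ, 1 ≤ k → M k = max (Cavg (k - 1) / α) μ)
    (i k : ℕ) (hi : 1 ≤ i) (hik : i < k) :
    M k ≥ ((i : ℝ) / (k : ℝ)) * M i := by
  have hk : 1 ≤ k := hi.trans hik.le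
  have hipos : (0:ℝ) < i := by exact_mod_cast hi
  have hkpos : (0:ℝ) < k := by exact_mod_cast hk
  have hik' : (i:ℝ) ≤ k := by exact_mod_cast hik.le
  have hi' : i - 1 + 1 = i := Nat.succ_pred_eq_of_pos hi
  have hk' : k - 1 + 1 = k := Nat.succ_pred_eq_of_pos hk
  have hcasti : ((i - 1 : ℕ) : ℝ) + 1 = (i : ℝ) := by
    push_cast [Nat.cast_sub hi]; ring
  have hcastk : ((k - 1 : ℕ) : ℝ) + 1 = (k : ℝ) := by
    push_cast [Nat.cast_sub hk]; ring
  have ha : Cavg (i - 1) = (∑ j ∈ Finset.range i, C j) / i := by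
    rw [hCavg, hi', hcasti]; ring
  have hb : Cavg (k - 1) = (∑ j ∈ Finset.range k, C j) / k := by
    rw [hCavg, hk', hcastk]; ring
  have hsum : ∑ j ∈ Finset.range i, C j ≤ ∑ j ∈ Finset.range k, C j :=
    Finset.sum_le_sum_of_subset_of_nonneg (Finset.range_subset_range.mpr hik.le)
      (fun j _ _ => hC j)
  have hb' : ((i:ℝ)/k) * Cavg (i - 1) ≤ Cavg (k - 1) := by
    rw [ha, hb]
    have heq : (i:ℝ)/k * ((∑ j ∈ Finset.range i, C j)/i)
        = (∑ j ∈ Finset.range i, C j)/k := by field_simp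
    rw [heq]
    gcongr
  rw [hMk k hk, hMk i hi]
  have hfrac : 0 ≤ (i:ℝ)/k := by positivity
  have h1 : (i:ℝ)/k * (Cavg (i-1)/α) ≤ Cavg (k-1)/α := by
    rw [show (i:ℝ)/k * (Cavg (i-1)/α) = ((i:ℝ)/k * Cavg (i-1))/α by ring]
    gcongr
  have h2 : (i:ℝ)/k * μ ≤ μ := by
    have hle1 : (i:ℝ)/k ≤ 1 := (div_le_one hkpos).mpr hik'
    nlinarith
  rw [mul_max_of_nonneg _ _ hfrac]
  exact max_le (h1.trans (le_max_left _ _)) (h2.trans (le_max_right _ _))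
end

section
/- Let M : ℕ → ℝ be any sequence with M_i > 0 for all i, and define A : ℕ → ℝ and a : ℕ → ℝ by A_0 := 0, a_k := (1 + √(1 + 4·M_k·A_k))/(2·M_k), A_{k+1} := A_k + a_k. Let θ_k := max_{0 ≤ i ≤ k} M_k/M_i. Then for every k ≥ 12: A_k ≤ ( ∑_{i=0}^{k−1} 1/√(M_i) )² ≤ k·∑_{i=0}^{k−1} 1/M_i ≤ k²·θ_k/M_k. -/
lemma stmt5_aux (M : ℕ → ℝ) (hM : ∀ i, 0 < M i)
    (A a : ℕ → ℝ) (hA0 : A 0 = 0)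
    (ha : ∀ k, a k = (1 + Real.sqrt (1 + 4 * M k * A k)) / (2 * M k))
    (hA : ∀ k, A (k + 1) = A k + a k) :
    ∀ k, 0 ≤ A k ∧ A k ≤ (∑ i ∈ Finset.range k, 1 / Real.sqrt (M i)) ^ 2 := by
  intro k
  induction k with
  | zero => simp [hA0]
  | succ k ih =>
    obtain ⟨h0, h1⟩ := ih
    have hMk := hM k
    set S := ∑ i ∈ Finset.range k, 1 / Real.sqrt (M i) with hSdef
    have hS : 0 ≤ S := Finset.sum_nonneg fun i _ => by positivity
    have hsM : 0 < Real.sqrt (M k) := Real.sqrt_pos.2 hMk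
    set T : ℝ := 1 / Real.sqrt (M k) with hTdef
    have hT : 0 ≤ T := by positivity
    have hsq : Real.sqrt (M k) ^ 2 = M k := Real.sq_sqrt hMk.le
    have hMT2 : M k * T ^ 2 = 1 := by
      rw [hTdef, div_pow, one_pow, hsq]; field_simp
    have hTM : T * M k = Real.sqrt (M k) := by
      rw [hTdef, one_div, inv_mul_eq_div, Real.div_sqrt]
    have hsqA : Real.sqrt (A k) ≤ S := by
      calc Real.sqrt (A k) ≤ Real.sqrt (S ^ 2) := Real.sqrt_le_sqrt h1
        _ = S := Real.sqrt_sq hS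
    have key : Real.sqrt (1 + 4 * M k * A k)
        ≤ 1 + 2 * Real.sqrt (M k) * Real.sqrt (A k) := by
      rw [show (1:ℝ) + 2 * Real.sqrt (M k) * Real.sqrt (A k)
          = Real.sqrt ((1 + 2 * Real.sqrt (M k) * Real.sqrt (A k)) ^ 2) from
          (Real.sqrt_sq (by positivity)).symm]
      apply Real.sqrt_le_sqrt
      have h2 : Real.sqrt (A k) ^ 2 = A k := Real.sq_sqrt h0
      nlinarith [mul_nonneg hsM.le (Real.sqrt_nonneg (A k))]
    have h6 : a k ≤ T ^ 2 + Real.sqrt (A k) * T := by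
      rw [ha k, div_le_iff₀ (by positivity)]
      have hr : (T ^ 2 + Real.sqrt (A k) * T) * (2 * M k)
          = 2 * (M k * T ^ 2) + 2 * Real.sqrt (A k) * (T * M k) := by ring
      rw [hr, hMT2, hTM]
      nlinarith [key]
    have ha0 : 0 ≤ a k := by
      rw [ha k]; positivity
    constructor
    · rw [hA k]; linarith
    · rw [hA k, Finset.sum_range_succ, ← hSdef, ← hTdef]
      nlinarith [mul_le_mul_of_nonneg_right hsqA hT]

/-- Lemma 7, upper-bound chain (4.9): with `A_0 = 0`,
`a_k = (1 + √(1 + 4 M_k A_k))/(2 M_k)`, `A_{k+1} = A_k + a_k` and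
`θ_k = max_{0 ≤ i ≤ k} M_k/M_i`, for every `k ≥ 12`:
`A_k ≤ (∑_{i<k} 1/√M_i)² ≤ k ∑_{i<k} 1/M_i ≤ k² θ_k / M_k`. -/
theorem stmt5 (M : ℕ → ℝ) (hM : ∀ i, 0 < M i)
    (A a : ℕ → ℝ) (hA0 : A 0 = 0)
    (ha : ∀ k, a k = (1 + Real.sqrt (1 + 4 * M k * A k)) / (2 * M k))
    (hA : ∀ k, A (k + 1) = A k + a k)
    (k : ℕ) (hk : 12 ≤ k) :
    A k ≤ (∑ i ∈ Finset.range k, 1 / Real.sqrt (M i)) ^ 2 ∧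
    (∑ i ∈ Finset.range k, 1 / Real.sqrt (M i)) ^ 2
      ≤ (k : ℝ) * ∑ i ∈ Finset.range k, 1 / M i ∧
    (k : ℝ) * ∑ i ∈ Finset.range k, 1 / M i
      ≤ (k : ℝ) ^ 2 *
        ((Finset.range (k + 1)).sup' (Finset.nonempty_range_iff.mpr (Nat.succ_ne_zero k))
          (fun i => M k / M i)) / M k := by
  refine ⟨(stmt5_aux M hM A a hA0 ha hA k).2, ?_, ?_⟩
  · have := sq_sum_le_card_mul_sum_sq (s := Finset.range k)
      (f := fun i => 1 / Real.sqrt (M i))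
    simp only [Finset.card_range] at this
    calc (∑ i ∈ Finset.range k, 1 / Real.sqrt (M i)) ^ 2
        ≤ (k : ℝ) * ∑ i ∈ Finset.range k, (1 / Real.sqrt (M i)) ^ 2 := this
      _ = (k : ℝ) * ∑ i ∈ Finset.range k, 1 / M i := by
          congr 1
          apply Finset.sum_congr rfl
          intro i _
          rw [div_pow, one_pow, Real.sq_sqrt (hM i).le]
  · set θ := (Finset.range (k + 1)).sup'
      (Finset.nonempty_range_iff.mpr (Nat.succ_ne_zero k)) (fun i => M k / M i) with hθdef
    have hsum : ∑ i ∈ Finset.range k, 1 / M i ≤ (k : ℝ) * (θ / M k) := by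
      calc ∑ i ∈ Finset.range k, 1 / M i
          ≤ ∑ i ∈ Finset.range k, θ / M k := by
            apply Finset.sum_le_sum
            intro i hi
            have hle : M k / M i ≤ θ :=
              Finset.le_sup' (fun i => M k / M i)
                (Finset.mem_range.2 (Nat.lt_succ_of_lt (Finset.mem_range.1 hi)))
            have h1 : 1 / M i = (M k / M i) / M k := by
              rw [div_div, mul_comm, ← div_div, div_self (hM k).ne', one_div, ← one_div]
            rw [h1]
            exact div_le_div_of_nonneg_right hle (hM k).le
        _ = (k : ℝ) * (θ / M k) := by rw [Finset.sum_const, Finset.card_range]; simp [nsmul_eq_mul]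
    have hk0 : (0:ℝ) ≤ (k : ℝ) := Nat.cast_nonneg k
    calc (k : ℝ) * ∑ i ∈ Finset.range k, 1 / M i
        ≤ (k : ℝ) * ((k : ℝ) * (θ / M k)) := mul_le_mul_of_nonneg_left hsum hk0
      _ = (k : ℝ) ^ 2 * θ / M k := by ring
end

section
/- Let M : ℕ → ℝ be a sequence with M_i > 0 for all i, and define A : ℕ → ℝ and a : ℕ → ℝ by A_0 := 0, a_k := (1 + √(1 + 4·M_k·A_k))/(2·M_k), A_{k+1} := A_k + a_k. Let k ≥ 12 and suppose that M_k ≥ (i/k)·M_i for every integer i with 1 ≤ i < k. Then A_k ≥ (1/4)·( ∑_{i=0}^{k−1} 1/√(M_i) )² ≥ k²/(12·M_k). -/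
set_option maxHeartbeats 1000000 in
/-- Lemma 7, lower-bound chain (4.10): with `A_0 = 0`,
`a_k = (1 + √(1 + 4 M_k A_k))/(2 M_k)`, `A_{k+1} = A_k + a_k`, if `k ≥ 12` and
`M_k ≥ (i/k) M_i` for all `1 ≤ i < k`, then
`A_k ≥ (1/4)(∑_{i<k} 1/√M_i)² ≥ k²/(12 M_k)`. -/
theorem stmt6 (M : ℕ → ℝ) (hM : ∀ i, 0 < M i)
    (A a : ℕ → ℝ) (hA0 : A 0 = 0)
    (ha : ∀ k, a k = (1 + Real.sqrt (1 + 4 * M k * A k)) / (2 * M k))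
    (hA : ∀ k, A (k + 1) = A k + a k)
    (k : ℕ) (hk : 12 ≤ k)
    (havg : ∀ i : ℕ, 1 ≤ i → i < k → M k ≥ ((i : ℝ) / (k : ℝ)) * M i) :
    A k ≥ 1 / 4 * (∑ i ∈ Finset.range k, 1 / Real.sqrt (M i)) ^ 2 ∧
    1 / 4 * (∑ i ∈ Finset.range k, 1 / Real.sqrt (M i)) ^ 2
      ≥ (k : ℝ) ^ 2 / (12 * M k) := by
  have hAnn : ∀ n, 0 ≤ A n := by
    intro n
    induction n with
    | zero => rw [hA0]
    | succ n ih =>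
      have h1 : 0 ≤ 1 + Real.sqrt (1 + 4 * M n * A n) := by positivity
      have h2 : (0:ℝ) < 2 * M n := by have := hM n; linarith
      have := div_nonneg h1 h2.le
      rw [hA n, ha n]
      linarith
  have hstep : ∀ n, Real.sqrt (A (n+1)) ≥ Real.sqrt (A n) + 1/(2 * Real.sqrt (M n)) := by
    intro n
    have hMn := hM n
    have hAn := hAnn n
    have hsnn : (0:ℝ) ≤ 1 + 4 * M n * A n := by nlinarith
    have hs : Real.sqrt (1 + 4 * M n * A n) ^ 2 = 1 + 4 * M n * A n := Real.sq_sqrt hsnn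
    set s := Real.sqrt (1 + 4 * M n * A n) with hsdef
    have hs0 : 0 ≤ s := Real.sqrt_nonneg _
    have hMne : M n ≠ 0 := hMn.ne'
    have hAsucc : A (n+1) = M n * (a n)^2 := by
      rw [hA n, ha n]
      field_simp
      nlinarith [hs, Real.sq_sqrt (show (0:ℝ) ≤ 1 + A n * 4 * M n by nlinarith)]
    have han : 0 ≤ a n := by
      rw [ha n]
      positivity
    have h1 : Real.sqrt (A (n+1)) = Real.sqrt (M n) * a n := by
      rw [hAsucc, Real.sqrt_mul hMn.le, Real.sqrt_sq han]
    set m := Real.sqrt (M n) with hmdef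
    have hm : 0 < m := Real.sqrt_pos.2 hMn
    have hmm : m ^ 2 = M n := Real.sq_sqrt hMn.le
    have hrA : Real.sqrt (A n) ^ 2 = A n := Real.sq_sqrt hAn
    have hrA0 : 0 ≤ Real.sqrt (A n) := Real.sqrt_nonneg _
    have hsq : s ≥ 2 * m * Real.sqrt (A n) := by
      have hle : (2 * m * Real.sqrt (A n))^2 ≤ s^2 := by
        rw [hs]
        nlinarith
      nlinarith [hs0, mul_nonneg (mul_nonneg (by norm_num : (0:ℝ) ≤ 2) hm.le) hrA0]
    rw [h1, ha n, ge_iff_le, ← sub_nonneg]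
    have key : m * ((1 + s) / (2 * M n)) - (Real.sqrt (A n) + 1 / (2 * m))
        = (s - 2 * m * Real.sqrt (A n)) / (2 * m) := by
      rw [← hmm]
      field_simp
      ring
    rw [key]
    apply div_nonneg (by linarith) (by linarith)
  have hmain : ∀ n, Real.sqrt (A n) ≥ 1/2 * ∑ i ∈ Finset.range n, 1 / Real.sqrt (M i) := by
    intro n
    induction n with
    | zero => simp
    | succ n ih =>
      rw [Finset.sum_range_succ]
      have h1 := hstep n
      have h2 : 1/2 * ((∑ i ∈ Finset.range n, 1 / Real.sqrt (M i)) + 1 / Real.sqrt (M n))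
          = 1/2 * (∑ i ∈ Finset.range n, 1 / Real.sqrt (M i)) + 1/(2 * Real.sqrt (M n)) := by
        ring
      rw [h2]
      linarith
  set S := ∑ i ∈ Finset.range k, 1 / Real.sqrt (M i) with hSdef
  have hS0 : 0 ≤ S := by
    apply Finset.sum_nonneg
    intro i _
    positivity
  have hAk : A k = Real.sqrt (A k) ^ 2 := (Real.sq_sqrt (hAnn k)).symm
  have part1 : A k ≥ 1 / 4 * S ^ 2 := by
    rw [hAk]
    nlinarith [hmain k]
  refine ⟨part1, ?_⟩
  -- Part 2
  have hk0 : (0:ℝ) < (k:ℝ) := by positivity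
  have hkr : (12:ℝ) ≤ (k:ℝ) := by exact_mod_cast hk
  have hMk := hM k
  set T := ∑ i ∈ Finset.range k, Real.sqrt (i:ℝ) with hTdef
  set w := Real.sqrt ((k:ℝ) * M k) with hwdef
  have hw : 0 < w := Real.sqrt_pos.2 (by positivity)
  have hw2 : w ^ 2 = (k:ℝ) * M k := Real.sq_sqrt (by positivity)
  have hterm : ∀ i ∈ Finset.range k, Real.sqrt (i:ℝ) / w ≤ 1 / Real.sqrt (M i) := by
    intro i hi
    rw [Finset.mem_range] at hi
    rcases Nat.eq_zero_or_pos i with h0 | h1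
    · subst h0
      simp only [Nat.cast_zero, Real.sqrt_zero, zero_div]
      positivity
    · have hMi := hM i
      have hmi : 0 < Real.sqrt (M i) := Real.sqrt_pos.2 hMi
      rw [div_le_div_iff₀ hw hmi]
      have h2 : (i:ℝ) * M i ≤ (k:ℝ) * M k := by
        have := havg i h1 hi
        have hik : (0:ℝ) < (k:ℝ) := hk0
        rw [ge_iff_le, div_mul_eq_mul_div, div_le_iff₀ hik] at this
        linarith
      calc Real.sqrt (i:ℝ) * Real.sqrt (M i) = Real.sqrt ((i:ℝ) * M i) :=
            (Real.sqrt_mul (by positivity) _).symm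
        _ ≤ Real.sqrt ((k:ℝ) * M k) := Real.sqrt_le_sqrt h2
        _ = 1 * w := (one_mul w).symm
  have hST : T / w ≤ S := by
    rw [hSdef, hTdef, Finset.sum_div]
    exact Finset.sum_le_sum hterm
  have hT0 : 0 ≤ T := Finset.sum_nonneg (fun i _ => Real.sqrt_nonneg _)
  -- lower bound on T
  have hg : ∀ i : ℕ, (2/3 : ℝ) * Real.sqrt ((i:ℝ)+1) ^ 3 - 2/3 * Real.sqrt (i:ℝ) ^ 3
      ≤ Real.sqrt ((i:ℝ)+1) := by
    intro i
    set u := Real.sqrt (i:ℝ) with hu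
    set v := Real.sqrt ((i:ℝ)+1) with hv
    have hu0 : 0 ≤ u := Real.sqrt_nonneg _
    have hv0 : 0 ≤ v := Real.sqrt_nonneg _
    have hu2 : u ^ 2 = (i:ℝ) := Real.sq_sqrt (by positivity)
    have hv2 : v ^ 2 = (i:ℝ) + 1 := Real.sq_sqrt (by positivity)
    nlinarith [mul_nonneg (sq_nonneg (v - u)) (by linarith : (0:ℝ) ≤ v + 2 * u)]
  obtain ⟨n, rfl⟩ : ∃ n, k = n + 1 := ⟨k - 1, by omega⟩
  have hTge : (2/3 : ℝ) * Real.sqrt (n:ℝ) ^ 3 ≤ T := by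
    have htel : ∑ i ∈ Finset.range n,
        ((2/3 : ℝ) * Real.sqrt ((i:ℝ)+1) ^ 3 - 2/3 * Real.sqrt (i:ℝ) ^ 3)
        = 2/3 * Real.sqrt (n:ℝ) ^ 3 - 2/3 * Real.sqrt (0:ℝ) ^ 3 := by
      have := Finset.sum_range_sub (fun i => (2/3 : ℝ) * Real.sqrt (i:ℝ) ^ 3) n
      simp only [Nat.cast_add, Nat.cast_one] at this
      simpa using this
    have hsum : ∑ i ∈ Finset.range n,
        ((2/3 : ℝ) * Real.sqrt ((i:ℝ)+1) ^ 3 - 2/3 * Real.sqrt (i:ℝ) ^ 3)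
        ≤ ∑ i ∈ Finset.range n, Real.sqrt ((i:ℝ)+1) :=
      Finset.sum_le_sum (fun i _ => hg i)
    have hTeq : T = ∑ i ∈ Finset.range n, Real.sqrt ((i:ℝ)+1) := by
      rw [hTdef, Finset.sum_range_succ']
      push_cast
      simp
    norm_num at htel
    rw [Finset.sum_sub_distrib] at hsum
    rw [hTeq]
    linarith [htel, hsum]
  -- combine
  have hn2 : Real.sqrt (n:ℝ) ^ 2 = (n:ℝ) := Real.sq_sqrt (by positivity)
  have hT2 : (4/9 : ℝ) * (n:ℝ)^3 ≤ T^2 := by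
    have h6 : ((2:ℝ)/3 * Real.sqrt (n:ℝ) ^ 3)^2 = 4/9 * (n:ℝ)^3 := by
      have h66 : Real.sqrt (n:ℝ)^6 = (n:ℝ)^3 := by
        rw [show (6:ℕ) = 2*3 from rfl, pow_mul, hn2]
      calc ((2:ℝ)/3 * Real.sqrt (n:ℝ) ^ 3)^2 = 4/9 * Real.sqrt (n:ℝ)^6 := by ring
        _ = 4/9 * (n:ℝ)^3 := by rw [h66]
    calc (4/9 : ℝ) * (n:ℝ)^3 = ((2:ℝ)/3 * Real.sqrt (n:ℝ) ^ 3)^2 := h6.symm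
      _ ≤ T^2 := pow_le_pow_left₀ (by positivity) hTge 2
  have hS2 : (T/w)^2 ≤ S^2 :=
    pow_le_pow_left₀ (div_nonneg hT0 hw.le) hST 2
  have hS2' : T^2 / (((n:ℝ)+1) * M (n+1)) ≤ S^2 := by
    have hEq : (T/w)^2 = T^2 / (((n:ℝ)+1) * M (n+1)) := by
      rw [div_pow, hw2]
      push_cast
      ring
    calc T^2 / (((n:ℝ)+1) * M (n+1)) = (T/w)^2 := hEq.symm
      _ ≤ S^2 := hS2
  have hdiv : (4/9 : ℝ) * (n:ℝ)^3 / (((n:ℝ)+1) * M (n+1)) ≤ T^2 / (((n:ℝ)+1) * M (n+1)) :=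
    (div_le_div_iff_of_pos_right (by positivity)).mpr hT2
  have hn11 : (11:ℝ) ≤ (n:ℝ) := by
    have : 11 ≤ n := by omega
    exact_mod_cast this
  have heq : (1:ℝ)/4 * ((4/9 : ℝ) * (n:ℝ)^3 / (((n:ℝ)+1) * M (n+1)))
      = (n:ℝ)^3 / (9 * (((n:ℝ)+1) * M (n+1))) := by
    have hMp := hM (n+1)
    have hD : ((n:ℝ)+1) * M (n+1) ≠ 0 := by positivity
    field_simp
  have hfin : ((n:ℝ)+1)^2 / (12 * M (n+1)) ≤ (n:ℝ)^3 / (9 * (((n:ℝ)+1) * M (n+1))) := by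
    rw [div_le_div_iff₀ (by positivity) (by positivity)]
    have hMp := hM (n+1)
    have hkey : (0:ℝ) ≤ 12 * (n:ℝ)^3 - 9 * ((n:ℝ)+1)^3 := by
      nlinarith [mul_nonneg (by linarith : (0:ℝ) ≤ (n:ℝ) - 11) (sq_nonneg (n:ℝ)),
        mul_nonneg (by linarith : (0:ℝ) ≤ (n:ℝ) - 11) (by linarith : (0:ℝ) ≤ (n:ℝ))]
    nlinarith [mul_nonneg hMp.le hkey]
  have hS2'' : (4/9 : ℝ) * (n:ℝ)^3 / (((n:ℝ)+1) * M (n+1)) ≤ S^2 := le_trans hdiv hS2'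
  push_cast
  linarith [hfin, hS2'', heq]
end

section
/- Let γ ∈ (0,1), α := (0.9/8)·(1 + 1/(0.9·γ))⁻¹, let M̄ > 0 and M ≥ M̄, and let C : ℕ → ℝ satisfy 0 ≤ C_j ≤ M̄ for all j. Define C^avg_k := (1/(k+1))·∑_{j=0}^{k} C_j, M_0 := γ·M, M_k := max{ C^avg_{k−1}/α, γ·M } for k ≥ 1, and ℬ_k := { i : 0 ≤ i ≤ k−1 and C_i > 0.9·M_i }. Then for every k ≥ 12, the cardinality of ℬ_k satisfies |ℬ_k| ≤ k/3. -/
set_option maxHeartbeats 1600000 in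
/-- Lemma 5: with `γ ∈ (0,1)`, `α = (0.9/8)(1 + 1/(0.9 γ))⁻¹`, `0 ≤ C_j ≤ M̄ ≤ M`,
running averages `C^avg`, and `M_0 = γM`, `M_k = max{C^avg_{k−1}/α, γM}`, the set
`ℬ_k = {i ≤ k−1 : C_i > 0.9 M_i}` of bad iterations satisfies `|ℬ_k| ≤ k/3`
for every `k ≥ 12`. -/
theorem stmt7 (γ : ℝ) (hγ0 : 0 < γ) (hγ1 : γ < 1)
    (α : ℝ) (hα : α = 0.9 / 8 * (1 + 1 / (0.9 * γ))⁻¹)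
    (Mbar M : ℝ) (hMbar : 0 < Mbar) (hM : Mbar ≤ M)
    (C : ℕ → ℝ) (hC0 : ∀ j, 0 ≤ C j) (hCM : ∀ j, C j ≤ Mbar)
    (Cavg : ℕ → ℝ)
    (hCavg : ∀ k, Cavg k = (1 / ((k : ℝ) + 1)) * ∑ j ∈ Finset.range (k + 1), C j)
    (Mseq : ℕ → ℝ) (hM0 : Mseq 0 = γ * M)
    (hMk : ∀ k : ℕ, 1 ≤ k → Mseq k = max (Cavg (k - 1) / α) (γ * M))
    (k : ℕ) (hk : 12 ≤ k) :
    (((Finset.range k).filter (fun i => 0.9 * Mseq i < C i)).card : ℝ) ≤ k / 3 := by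
  classical
  set B := (Finset.range k).filter (fun i => 0.9 * Mseq i < C i) with hBdef
  have hkR : (12 : ℝ) ≤ (k : ℝ) := by exact_mod_cast hk
  have h9γ : (0 : ℝ) < 0.9 * γ := by linarith
  have hαpos : 0 < α := by
    rw [hα]
    have h1 : (0 : ℝ) < 1 + 1 / (0.9 * γ) := by positivity
    positivity
  -- α ≤ 0.10125 γ
  have hαeq : α + α / (0.9 * γ) = 0.1125 := by
    rw [hα]
    field_simp
    ring
  have hαle : α ≤ 0.10125 * γ := by
    have h2 : 0 ≤ α / (0.9 * γ) := by positivity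
    have h3 : α / (0.9 * γ) = 0.1125 - α := by linarith
    have h4 : α = (0.1125 - α) * (0.9 * γ) := by
      rw [← h3]; field_simp
    nlinarith
  have hMpos : 0 < M := lt_of_lt_of_le hMbar hM
  have hMseq_ge : ∀ i, γ * M ≤ Mseq i := by
    intro i
    rcases Nat.eq_zero_or_pos i with h | h
    · rw [h, hM0]
    · rw [hMk i h]; exact le_max_right _ _
  have hbadC : ∀ j ∈ B, 0.9 * (γ * Mbar) ≤ C j := by
    intro j hj
    have h2 : 0.9 * Mseq j < C j := (Finset.mem_filter.mp hj).2
    have h3 : γ * Mbar ≤ γ * M := by nlinarith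
    nlinarith [hMseq_ge j]
  rcases B.eq_empty_or_nonempty with hB | hB
  · rw [hB]; simp; positivity
  set i := B.max' hB with hi
  have hiB : i ∈ B := B.max'_mem hB
  have hik : i < k := Finset.mem_range.mp (Finset.mem_filter.mp hiB).1
  rcases Nat.eq_zero_or_pos i with hi0 | hi1
  · -- all elements of B are ≤ i = 0, so card ≤ 1
    have hsub : B ⊆ {0} := by
      intro j hj
      have := B.le_max' j hj
      simp only [Finset.mem_singleton]
      omega
    have : B.card ≤ 1 := le_trans (Finset.card_le_card hsub) (by simp)
    have : (B.card : ℝ) ≤ 1 := by exact_mod_cast this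
    linarith
  · -- main case: i ≥ 1
    have hsub : B.erase i ⊆ Finset.range i := by
      intro j hj
      rw [Finset.mem_erase] at hj
      have := B.le_max' j hj.2
      rw [Finset.mem_range]
      omega
    set S := ∑ j ∈ Finset.range i, C j with hSdef
    set n := (B.erase i).card with hn
    have hS1 : (n : ℝ) * (0.9 * (γ * Mbar)) ≤ ∑ j ∈ B.erase i, C j := by
      have := Finset.card_nsmul_le_sum (B.erase i) C (0.9 * (γ * Mbar))
        (fun j hj => hbadC j (Finset.mem_of_mem_erase hj))
      rwa [nsmul_eq_mul] at this
    have hS2 : ∑ j ∈ B.erase i, C j ≤ S :=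
      Finset.sum_le_sum_of_subset_of_nonneg hsub (fun j _ _ => hC0 j)
    have hCavg' : Cavg (i - 1) = (1 / (i : ℝ)) * S := by
      have h1 : i - 1 + 1 = i := Nat.succ_pred_eq_of_pos hi1
      rw [hCavg (i - 1), h1]
      congr 2
      rw [Nat.cast_sub hi1]
      push_cast
      ring
    have hiR : (1 : ℝ) ≤ (i : ℝ) := by exact_mod_cast hi1
    have hMi : Cavg (i - 1) / α ≤ Mseq i := by
      rw [hMk i hi1]; exact le_max_left _ _
    have hCi : 0.9 * Mseq i < C i := (Finset.mem_filter.mp hiB).2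
    -- 0.9 * S / (i * α) ≤ 0.9 * Mseq i < C i ≤ Mbar
    have hmain : 0.9 * S < Mbar * (i : ℝ) * α := by
      have h1 : 0.9 * (Cavg (i - 1) / α) < Mbar := by
        nlinarith [hCM i]
      rw [hCavg'] at h1
      have h2 : 0.9 * ((1 / (i : ℝ)) * S / α) < Mbar := h1
      have hipos : (0 : ℝ) < (i : ℝ) := by linarith
      have h3 : (1 / (i : ℝ)) * S / α = S / ((i : ℝ) * α) := by
        field_simp
      rw [h3] at h2
      have h4 : (0 : ℝ) < (i : ℝ) * α := by positivity
      calc 0.9 * S = 0.9 * (S / ((i : ℝ) * α)) * ((i : ℝ) * α) := by field_simp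
        _ < Mbar * ((i : ℝ) * α) := by
            apply mul_lt_mul_of_pos_right h2 h4
        _ = Mbar * (i : ℝ) * α := by ring
    -- hence n < i / 8
    clear_value n S i B
    have hnlt : (n : ℝ) < (i : ℝ) / 8 := by
      have h1 : (n : ℝ) * (0.81 * (γ * Mbar)) < Mbar * (i : ℝ) * α := by linarith
      have h2 : Mbar * (i : ℝ) * α ≤ Mbar * (i : ℝ) * (0.10125 * γ) := by
        have : (0 : ℝ) ≤ Mbar * (i : ℝ) := by positivity
        nlinarith
      have h3 : (0 : ℝ) < γ * Mbar := by positivity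
      have h4 : ((n : ℝ) * 0.81) * (γ * Mbar) < ((i : ℝ) * 0.10125) * (γ * Mbar) := by
        calc ((n : ℝ) * 0.81) * (γ * Mbar) = (n : ℝ) * (0.81 * (γ * Mbar)) := by ring
          _ < Mbar * (i : ℝ) * α := h1
          _ ≤ Mbar * (i : ℝ) * (0.10125 * γ) := h2
          _ = ((i : ℝ) * 0.10125) * (γ * Mbar) := by ring
      have h5 := lt_of_mul_lt_mul_right h4 h3.le
      linarith
    have hBpos : 1 ≤ B.card := Finset.card_pos.mpr hB
    have hcard : B.card = n + 1 := by
      have h := Finset.card_erase_of_mem hiB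
      omega
    have hikR : (i : ℝ) ≤ (k : ℝ) - 1 := by
      have : (i : ℝ) + 1 ≤ (k : ℝ) := by exact_mod_cast hik
      linarith
    rw [hcard]
    push_cast
    linarith
end

section
/- Let γ ∈ (0,1), α := (0.9/8)·(1 + 1/(0.9·γ))⁻¹, let M̄ > 0 and M ≥ M̄, and let C : ℕ → ℝ satisfy 0 ≤ C_j ≤ M̄ for all j. Define C^avg_k := (1/(k+1))·∑_{j=0}^{k} C_j, M_0 := γ·M, M_k := max{ C^avg_{k−1}/α, γ·M } for k ≥ 1; define A_0 := 0, a_k := (1 + √(1 + 4·M_k·A_k))/(2·M_k), A_{k+1} := A_k + a_k; and define 𝒢_k := { i : 0 ≤ i ≤ k−1 and C_i ≤ 0.9·M_i }. Then for every k ≥ 12: ∑_{i ∈ 𝒢_k} A_{i+1}/M_i ≥ k³/(3402·M_k²). -/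
lemma aux_sum_range_card_le (f : ℕ → ℝ) (hf : Monotone f) (h0 : ∀ n, 0 ≤ f n) :
    ∀ (n : ℕ) (s : Finset ℕ), s.card = n →
      ∑ i ∈ Finset.range n, f i ≤ ∑ i ∈ s, f i := by
  intro n
  induction n with
  | zero => intro s _; simp [Finset.sum_nonneg fun i _ => h0 i]
  | succ n ih =>
    intro s hn
    have hne : s.Nonempty := Finset.card_pos.mp (by omega)
    set m := s.max' hne with hm
    have hsub : s ⊆ Finset.range (m + 1) := by
      intro x hx
      simp only [Finset.mem_range]
      exact Nat.lt_succ_of_le (Finset.le_max' s x hx)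
    have hcard : s.card ≤ m + 1 := by
      simpa using Finset.card_le_card hsub
    have hnm : n ≤ m := by omega
    have herase : (s.erase m).card = n := by
      rw [Finset.card_erase_of_mem (s.max'_mem hne)]; omega
    have hsum : ∑ i ∈ s, f i = f m + ∑ i ∈ s.erase m, f i := by
      rw [Finset.add_sum_erase _ _ (s.max'_mem hne)]
    rw [hsum, Finset.sum_range_succ]
    have h1 := hf hnm
    linarith [ih (s.erase m) herase]

lemma aux_sqrt_sum (m : ℕ) :
    2/3 * (m:ℝ) * Real.sqrt m ≤ ∑ j ∈ Finset.range (m+1), Real.sqrt j := by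
  induction m with
  | zero => simp
  | succ m ih =>
    rw [Finset.sum_range_succ]
    push_cast
    set u := Real.sqrt ((m:ℝ)+1) with hu
    set v := Real.sqrt (m:ℝ) with hv
    have hu2 : u^2 = (m:ℝ)+1 := Real.sq_sqrt (by positivity)
    have hv2 : v^2 = (m:ℝ) := Real.sq_sqrt (by positivity)
    have hv0 : 0 ≤ v := Real.sqrt_nonneg _
    have hu0 : 0 ≤ u := Real.sqrt_nonneg _
    have huv : v ≤ u := Real.sqrt_le_sqrt (by linarith)
    have hu1 : 1 ≤ u := by nlinarith
    have key : 2/3 * ((m:ℝ)+1) * u ≤ 2/3 * (m:ℝ) * v + u := by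
      nlinarith [mul_nonneg hv0 (sub_nonneg.mpr huv), sq_nonneg (u - v),
        mul_nonneg (mul_nonneg hv0 hv0) (sub_nonneg.mpr huv)]
    linarith

lemma aux_pow4_sum (m : ℕ) :
    ((m:ℝ)-1)^5/5 ≤ ∑ i ∈ Finset.range m, (i:ℝ)^4 := by
  induction m with
  | zero => norm_num
  | succ m ih =>
    rw [Finset.sum_range_succ]
    push_cast
    rcases Nat.eq_zero_or_pos m with h | h
    · subst h; norm_num
    · have h1 : (1:ℝ) ≤ (m:ℝ) := by exact_mod_cast h
      nlinarith [sq_nonneg ((m:ℝ)-1), sq_nonneg (m:ℝ)]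

lemma aux_sqrt_step (Mi Ai ai A1 : ℝ) (hMi : 0 < Mi) (hAi : 0 ≤ Ai)
    (ha : ai = (1 + Real.sqrt (1 + 4 * Mi * Ai)) / (2 * Mi))
    (hA : A1 = Ai + ai) :
    Real.sqrt Ai + 1/(2*Real.sqrt Mi) ≤ Real.sqrt A1 := by
  have han : 0 ≤ ai := by
    rw [ha]
    have h2 := Real.sqrt_nonneg (1 + 4 * Mi * Ai)
    positivity
  have hy : 0 ≤ Ai + ai := by linarith
  obtain ⟨s, hs⟩ : ∃ s, s = Real.sqrt Mi := ⟨_, rfl⟩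
  obtain ⟨t, htt⟩ : ∃ t, t = Real.sqrt Ai := ⟨_, rfl⟩
  have hsM : 0 < s := hs ▸ Real.sqrt_pos.mpr hMi
  have hsM2 : s ^ 2 = Mi := hs ▸ Real.sq_sqrt (le_of_lt hMi)
  have hsA : 0 ≤ t := htt ▸ Real.sqrt_nonneg _
  have hsA2 : t ^ 2 = Ai := htt ▸ Real.sq_sqrt hAi
  have hkey : 2 * (s * t) ≤ Real.sqrt (1 + 4 * Mi * Ai) := by
    have h1 : Real.sqrt (4 * Mi * Ai) ≤ Real.sqrt (1 + 4 * Mi * Ai) :=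
      Real.sqrt_le_sqrt (by nlinarith)
    have h2 : Real.sqrt (4 * Mi * Ai) = 2 * (s * t) := by
      rw [show 4 * Mi * Ai = (2*(s*t))^2 by nlinarith]
      exact Real.sqrt_sq (by positivity)
    linarith [h2 ▸ h1]
  have h6 : t^2 + (1 + 2*(s*t))/(2*Mi) ≤ Ai + ai := by
    rw [ha]
    have h61 : (1+2*(s*t))/(2*Mi) ≤ (1 + Real.sqrt (1+4*Mi*Ai))/(2*Mi) := by
      gcongr
    linarith
  have h7 : (t + 1/(2*s))^2 ≤ t^2 + (1+2*(s*t))/(2*Mi) := by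
    rw [← hsM2]
    have hsne : s ≠ 0 := ne_of_gt hsM
    have e1 : (t + 1/(2*s))^2 = t^2 + t/s + 1/(4*s^2) := by
      field_simp
      ring
    have e2 : (1+2*(s*t))/(2*s^2) = 1/(2*s^2) + t/s := by
      field_simp
    have e3 : 1/(4*s^2) ≤ 1/(2*s^2) :=
      div_le_div_of_nonneg_left (by norm_num) (by positivity)
        (by nlinarith [sq_nonneg s])
    linarith
  rw [hA, ← htt]
  rw [← hs]
  exact (Real.le_sqrt (by positivity) hy).mpr (le_trans h7 h6)

lemma aux_term (x kk Mk Mi Ai1 : ℝ) (hk : 0 < kk) (hMk : 0 < Mk)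
    (hx : 1 ≤ x) (hMi : 0 < Mi) (hAnn : 0 ≤ Ai1)
    (hMile : Mi ≤ kk/x * Mk)
    (hAlb : x^3/(9*(kk*Mk)) ≤ Ai1) :
    x^4/(9*kk^2*Mk^2) ≤ Ai1/Mi := by
  have hx0 : (0:ℝ) < x := by linarith
  calc x^4/(9*kk^2*Mk^2) = (x^3/(9*(kk*Mk)))/((kk/x)*Mk) := by
        field_simp
    _ ≤ (x^3/(9*(kk*Mk)))/Mi :=
        div_le_div_of_nonneg_left (by positivity) hMi hMile
    _ ≤ Ai1/Mi := by gcongr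

lemma aux_A_lb (x kk Mk S Ai1 : ℝ) (hx : 0 ≤ x) (hkk : 0 < kk) (hMk : 0 < Mk)
    (hAnn : 0 ≤ Ai1)
    (hs : 2/3*x*Real.sqrt x ≤ S) (hc : S/(2*Real.sqrt (kk*Mk)) ≤ Real.sqrt Ai1) :
    x^3/(9*(kk*Mk)) ≤ Ai1 := by
  have hkM : (0:ℝ) < kk*Mk := mul_pos hkk hMk
  have hsk : 0 < Real.sqrt (kk*Mk) := Real.sqrt_pos.mpr hkM
  have h1 : x*Real.sqrt x/(3*Real.sqrt (kk*Mk)) ≤ Real.sqrt Ai1 := by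
    have e : x*Real.sqrt x/(3*Real.sqrt (kk*Mk))
        = (2/3*x*Real.sqrt x)/(2*Real.sqrt (kk*Mk)) := by
      field_simp
    rw [e]
    refine le_trans ?_ hc
    gcongr
  have h21 : (x*Real.sqrt x/(3*Real.sqrt (kk*Mk)))^2 ≤ Real.sqrt Ai1 ^2 :=
    pow_le_pow_left₀ (by positivity) h1 2
  have e2 : (x*Real.sqrt x/(3*Real.sqrt (kk*Mk)))^2 = x^3/(9*(kk*Mk)) := by
    rw [div_pow, mul_pow, mul_pow, Real.sq_sqrt hx, Real.sq_sqrt (le_of_lt hkM)]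
    ring
  rw [e2, Real.sq_sqrt hAnn] at h21
  exact h21

lemma aux_cumul_step (Mn nn kk Mk : ℝ) (hMn : 0 < Mn) (hnn : 0 ≤ nn)
    (hkk : 0 < kk) (hMk : 0 < Mk) (hMle : Mn * nn ≤ kk * Mk) :
    Real.sqrt nn / (2*Real.sqrt (kk*Mk)) ≤ 1/(2*Real.sqrt Mn) := by
  have hkM : (0:ℝ) < kk*Mk := mul_pos hkk hMk
  have hsk : 0 < Real.sqrt (kk*Mk) := Real.sqrt_pos.mpr hkM
  have hsMn : 0 < Real.sqrt Mn := Real.sqrt_pos.mpr hMn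
  have h4 : Real.sqrt Mn * Real.sqrt nn ≤ Real.sqrt (kk*Mk) := by
    rw [← Real.sqrt_mul hMn.le]
    exact Real.sqrt_le_sqrt hMle
  rw [div_le_div_iff₀ (by positivity) (by positivity)]
  nlinarith [Real.sqrt_nonneg nn]

set_option maxHeartbeats 2000000 in
/-- Lemma 8: with `γ ∈ (0,1)`, `α = (0.9/8)(1 + 1/(0.9 γ))⁻¹`, `0 ≤ C_j ≤ M̄ ≤ M`,
running averages `C^avg`, modified average curvatures `M_0 = γM`,
`M_k = max{C^avg_{k−1}/α, γM}`, accumulated stepsizes `A_0 = 0`,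
`a_k = (1 + √(1 + 4 M_k A_k))/(2 M_k)`, `A_{k+1} = A_k + a_k`, and good set
`𝒢_k = {i ≤ k−1 : C_i ≤ 0.9 M_i}`, for every `k ≥ 12`:
`∑_{i ∈ 𝒢_k} A_{i+1}/M_i ≥ k³/(3402 M_k²)`. -/
theorem stmt8 (γ : ℝ) (hγ0 : 0 < γ) (hγ1 : γ < 1)
    (α : ℝ) (hα : α = 0.9 / 8 * (1 + 1 / (0.9 * γ))⁻¹)
    (Mbar M : ℝ) (hMbar : 0 < Mbar) (hM : Mbar ≤ M)
    (C : ℕ → ℝ) (hC0 : ∀ j, 0 ≤ C j) (hCM : ∀ j, C j ≤ Mbar)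
    (Cavg : ℕ → ℝ)
    (hCavg : ∀ k, Cavg k = (1 / ((k : ℝ) + 1)) * ∑ j ∈ Finset.range (k + 1), C j)
    (Mseq : ℕ → ℝ) (hM0 : Mseq 0 = γ * M)
    (hMk : ∀ k : ℕ, 1 ≤ k → Mseq k = max (Cavg (k - 1) / α) (γ * M))
    (A a : ℕ → ℝ) (hA0 : A 0 = 0)
    (ha : ∀ k, a k = (1 + Real.sqrt (1 + 4 * Mseq k * A k)) / (2 * Mseq k))
    (hA : ∀ k, A (k + 1) = A k + a k)
    (k : ℕ) (hk : 12 ≤ k) :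
    ∑ i ∈ (Finset.range k).filter (fun i => C i ≤ 0.9 * Mseq i), A (i + 1) / Mseq i
      ≥ (k : ℝ) ^ 3 / (3402 * Mseq k ^ 2) := by
  have hMpos : 0 < M := lt_of_lt_of_le hMbar hM
  have hγM : 0 < γ * M := mul_pos hγ0 hMpos
  have hα0 : 0 < α := by
    rw [hα]
    have h1 : (0:ℝ) < 0.9 * γ := by positivity
    have h2 : (0:ℝ) < 1 + 1/(0.9*γ) := by positivity
    positivity
  -- α is small: 8 α ≤ 0.81 γ
  have hαsmall : 8 * α ≤ 0.81 * γ := by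
    have h1 : (0:ℝ) < 0.9 * γ := by positivity
    have h3 : (0:ℝ) < 0.9 * γ + 1 := by linarith
    have h2 : (1 + 1 / (0.9 * γ))⁻¹ = (0.9 * γ) / (0.9 * γ + 1) := by
      field_simp
    have h4 : 8 * (0.9 / 8 * ((0.9 * γ) / (0.9 * γ + 1)))
        = (0.9 * (0.9 * γ)) / (0.9 * γ + 1) := by ring
    rw [hα, h2, h4, div_le_iff₀ h3]
    nlinarith
  -- Cavg nonneg, and formula for Cavg (i-1) when 1 ≤ i
  have hCavg_nonneg : ∀ j, 0 ≤ Cavg j := by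
    intro j; rw [hCavg]
    have : 0 ≤ ∑ i ∈ Finset.range (j+1), C i := Finset.sum_nonneg fun i _ => hC0 i
    positivity
  have hCavg_pred : ∀ i : ℕ, 1 ≤ i →
      Cavg (i-1) = (1/(i:ℝ)) * ∑ j ∈ Finset.range i, C j := by
    intro i hi
    rw [hCavg, Nat.sub_add_cancel hi, Nat.cast_sub hi]
    norm_num
  have hMge : ∀ i, γ * M ≤ Mseq i := by
    intro i
    cases i with
    | zero => rw [hM0]
    | succ n => rw [hMk (n+1) (by omega)]; exact le_max_right _ _
  have hMposseq : ∀ i, 0 < Mseq i := fun i => lt_of_lt_of_le hγM (hMge i)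
  have hMk_ge_avg : ∀ i : ℕ, 1 ≤ i → Cavg (i-1) / α ≤ Mseq i := by
    intro i hi; rw [hMk i hi]; exact le_max_left _ _
  have hkR : (12:ℝ) ≤ (k:ℝ) := by exact_mod_cast hk
  have hk0 : (0:ℝ) < (k:ℝ) := by linarith
  -- M_i ≤ (k/i) M_k for 1 ≤ i ≤ k
  have keyM : ∀ i : ℕ, 1 ≤ i → i ≤ k → Mseq i ≤ ((k:ℝ)/(i:ℝ)) * Mseq k := by
    intro i hi1 hik
    have hiR : (1:ℝ) ≤ (i:ℝ) := by exact_mod_cast hi1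
    have hi0 : (0:ℝ) < (i:ℝ) := by linarith
    have hik' : (i:ℝ) ≤ (k:ℝ) := by exact_mod_cast hik
    have hkik : (1:ℝ) ≤ (k:ℝ)/(i:ℝ) := by
      rw [le_div_iff₀ hi0]; linarith
    rw [hMk i hi1]
    apply max_le
    · have hS : ∑ j ∈ Finset.range i, C j ≤ ∑ j ∈ Finset.range k, C j :=
        Finset.sum_le_sum_of_subset_of_nonneg
          (Finset.range_subset_range.mpr hik) (fun j _ _ => hC0 j)
      have hSnn : 0 ≤ ∑ j ∈ Finset.range i, C j :=
        Finset.sum_nonneg fun j _ => hC0 j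
      have h3 : Cavg (k-1) / α ≤ Mseq k := hMk_ge_avg k (by omega)
      have h4 : (∑ j ∈ Finset.range i, C j) / ((k:ℝ) * α) ≤ Mseq k := by
        refine le_trans ?_ h3
        rw [hCavg_pred k (by omega)]
        have he : (1/(k:ℝ) * ∑ j ∈ Finset.range k, C j)/α
            = (∑ j ∈ Finset.range k, C j)/((k:ℝ)*α) := by
          field_simp
        rw [he]
        have hkα : (0:ℝ) < (k:ℝ)*α := by positivity
        gcongr
      have h5 : Cavg (i-1) / α = ((k:ℝ)/(i:ℝ)) *
          ((∑ j ∈ Finset.range i, C j) / ((k:ℝ) * α)) := by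
        rw [hCavg_pred i hi1]
        field_simp
      rw [h5]
      exact mul_le_mul_of_nonneg_left h4 (by positivity)
    · calc γ * M ≤ Mseq k := hMge k
        _ = 1 * Mseq k := (one_mul _).symm
        _ ≤ ((k:ℝ)/(i:ℝ)) * Mseq k :=
            mul_le_mul_of_nonneg_right hkik (le_of_lt (hMposseq k))
  -- A is nonneg
  have hAnn : ∀ i, 0 ≤ A i := by
    intro i
    induction i with
    | zero => rw [hA0]
    | succ n ihn =>
      rw [hA n]
      have h1 : 0 ≤ a n := by
        rw [ha n]
        have h2 := Real.sqrt_nonneg (1 + 4 * Mseq n * A n)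
        have h3 := hMposseq n
        positivity
      linarith
  have han : ∀ i, 0 ≤ a i := by
    intro i
    rw [ha i]
    have h2 := Real.sqrt_nonneg (1 + 4 * Mseq i * A i)
    have h3 := hMposseq i
    positivity
  -- key sqrt recursion
  have sqrt_step : ∀ i, Real.sqrt (A i) + 1/(2*Real.sqrt (Mseq i))
      ≤ Real.sqrt (A (i+1)) := fun i =>
    aux_sqrt_step (Mseq i) (A i) (a i) (A (i+1)) (hMposseq i) (hAnn i) (ha i) (hA i)
  have hkM : (0:ℝ) < (k:ℝ) * Mseq k := mul_pos hk0 (hMposseq k)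
  have hskM : 0 < Real.sqrt ((k:ℝ) * Mseq k) := Real.sqrt_pos.mpr hkM
  -- cumulative sqrt bound
  have sqrt_cumul : ∀ i, i ≤ k →
      (∑ j ∈ Finset.range i, Real.sqrt j) / (2*Real.sqrt ((k:ℝ)*Mseq k))
        ≤ Real.sqrt (A i) := by
    intro i
    induction i with
    | zero => intro _; simp
    | succ n ihn =>
      intro hnk
      have hn : n ≤ k := by omega
      have h1 := ihn hn
      have h2 := sqrt_step n
      have h3 : Real.sqrt (n:ℝ) / (2*Real.sqrt ((k:ℝ)*Mseq k))
          ≤ 1/(2*Real.sqrt (Mseq n)) := by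
        rcases Nat.eq_zero_or_pos n with h | h
        · subst h
          simp
        · have hn0 : (0:ℝ) < (n:ℝ) := by exact_mod_cast h
          have hMn : Mseq n * (n:ℝ) ≤ (k:ℝ)*Mseq k := by
            have hkey := keyM n h (by omega)
            calc Mseq n * (n:ℝ) ≤ ((k:ℝ)/(n:ℝ) * Mseq k) * (n:ℝ) :=
                  mul_le_mul_of_nonneg_right hkey (le_of_lt hn0)
              _ = (k:ℝ)*Mseq k := by field_simp
          exact aux_cumul_step (Mseq n) (n:ℝ) (k:ℝ) (Mseq k) (hMposseq n)
            (le_of_lt hn0) hk0 (hMposseq k) hMn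
      have hcast : ((n:ℕ):ℝ) = (n:ℝ) := rfl
      rw [Finset.sum_range_succ, add_div]
      calc (∑ j ∈ Finset.range n, Real.sqrt j)/(2*Real.sqrt ((k:ℝ)*Mseq k))
            + Real.sqrt (n:ℝ) / (2*Real.sqrt ((k:ℝ)*Mseq k))
          ≤ Real.sqrt (A n) + 1/(2*Real.sqrt (Mseq n)) := add_le_add h1 h3
        _ ≤ Real.sqrt (A (n+1)) := h2
  -- per-term lower bound
  have term_bound : ∀ i, i < k →
      (i:ℝ)^4/(9*(k:ℝ)^2*Mseq k^2) ≤ A (i+1) / Mseq i := by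
    intro i hik
    rcases Nat.eq_zero_or_pos i with h | h
    · subst h
      simpa using div_nonneg (hAnn 1) (le_of_lt (hMposseq 0))
    · have hiR : (1:ℝ) ≤ (i:ℝ) := by exact_mod_cast h
      have hAlb : (i:ℝ)^3/(9*((k:ℝ)*Mseq k)) ≤ A (i+1) :=
        aux_A_lb (i:ℝ) (k:ℝ) (Mseq k) _ (A (i+1)) (by positivity) hk0
          (hMposseq k) (hAnn (i+1)) (aux_sqrt_sum i) (sqrt_cumul (i+1) (by omega))
      exact aux_term (i:ℝ) (k:ℝ) (Mseq k) (Mseq i) (A (i+1)) hk0 (hMposseq k)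
        hiR (hMposseq i) (hAnn (i+1)) (keyM i h (le_of_lt hik)) hAlb
  -- counting bad steps
  classical
  set G := (Finset.range k).filter (fun i => C i ≤ 0.9 * Mseq i) with hG
  set B := (Finset.range k).filter (fun i => ¬ (C i ≤ 0.9 * Mseq i)) with hB
  have hGB : G.card + B.card = k := by
    rw [hG, hB, Finset.card_filter_add_card_filter_not, Finset.card_range]
  have hBle : (B.card : ℝ) ≤ 1 + (k:ℝ)/8 := by
    by_cases hb2 : B.card ≤ 1
    · have h1 : (B.card:ℝ) ≤ 1 := by exact_mod_cast hb2
      linarith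
    · push_neg at hb2
      have hne : B.Nonempty := Finset.card_pos.mp (by omega)
      set i0 := B.max' hne with hi0
      have hi0B : i0 ∈ B := B.max'_mem hne
      have hi0k : i0 < k := Finset.mem_range.mp (Finset.mem_filter.mp hi0B).1
      have hi0bad : ¬ (C i0 ≤ 0.9 * Mseq i0) := (Finset.mem_filter.mp hi0B).2
      have hi01 : 1 ≤ i0 := by
        by_contra hcon
        have h0 : i0 = 0 := by omega
        have hsub : B ⊆ {0} := by
          intro x hx
          have hx0 := Finset.le_max' B x hx
          rw [← hi0, h0] at hx0
          simp only [Finset.mem_singleton]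
          omega
        have := Finset.card_le_card hsub
        simp at this
        omega
      have hsum : 0.9*(γ*M)*((B.card:ℝ)-1) ≤ ∑ j ∈ Finset.range i0, C j := by
        have hsub : B.erase i0 ⊆ Finset.range i0 := by
          intro x hx
          rcases Finset.mem_erase.mp hx with ⟨hxne, hxB⟩
          have := Finset.le_max' B x hxB
          exact Finset.mem_range.mpr (by omega)
        have h1 : ∑ j ∈ B.erase i0, C j ≤ ∑ j ∈ Finset.range i0, C j :=
          Finset.sum_le_sum_of_subset_of_nonneg hsub (fun j _ _ => hC0 j)
        have h2 : ∀ x ∈ B.erase i0, 0.9*(γ*M) ≤ C x := by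
          intro x hx
          have hxB := (Finset.mem_erase.mp hx).2
          have hxbad : ¬ (C x ≤ 0.9 * Mseq x) := (Finset.mem_filter.mp hxB).2
          push_neg at hxbad
          have := hMge x
          nlinarith
        have h3 := Finset.card_nsmul_le_sum (B.erase i0) C _ h2
        rw [Finset.card_erase_of_mem hi0B, nsmul_eq_mul] at h3
        have hcast : ((B.card - 1 : ℕ):ℝ) = (B.card:ℝ) - 1 := by
          rw [Nat.cast_sub (by omega)]
          norm_num
        rw [hcast] at h3
        linarith
      have h4 : 0.9 * (Cavg (i0-1)/α) ≤ Mbar := by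
        push_neg at hi0bad
        have h5 := hMk_ge_avg i0 hi01
        have h6 := hCM i0
        nlinarith
      have h7 := hCavg_pred i0 hi01
      rw [h7] at h4
      have hi0R : (1:ℝ) ≤ (i0:ℝ) := by exact_mod_cast hi01
      have hi0kR : (i0:ℝ) ≤ (k:ℝ) := by exact_mod_cast le_of_lt hi0k
      have hb1 : (1:ℝ) ≤ (B.card:ℝ) := by
        exact_mod_cast (by omega : 1 ≤ B.card)
      have e8 : (0.9 * (((1/(i0:ℝ)) * ∑ j ∈ Finset.range i0, C j)/α)) * (α*(i0:ℝ))
          = 0.9 * ∑ j ∈ Finset.range i0, C j := by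
        field_simp
      have h8 : 0.9 * (∑ j ∈ Finset.range i0, C j) ≤ Mbar * (α * (i0:ℝ)) := by
        rw [← e8]
        exact mul_le_mul_of_nonneg_right h4 (by positivity)
      have h9 : Mbar * (α*(i0:ℝ)) ≤ M * (α * (k:ℝ)) := by
        apply mul_le_mul hM ?_ (by positivity) (le_of_lt hMpos)
        exact mul_le_mul_of_nonneg_left hi0kR (le_of_lt hα0)
      have h10 : M * (α*(k:ℝ)) ≤ M * ((0.81*γ/8) * (k:ℝ)) := by
        apply mul_le_mul_of_nonneg_left ?_ (le_of_lt hMpos)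
        apply mul_le_mul_of_nonneg_right ?_ (le_of_lt hk0)
        linarith
      nlinarith [hγM]
  -- assemble
  have hGcard : (k:ℝ) - 1 - (k:ℝ)/8 ≤ (G.card:ℝ) := by
    have hc : (G.card:ℝ) + (B.card:ℝ) = (k:ℝ) := by exact_mod_cast hGB
    linarith
  have hMk2 : (0:ℝ) < Mseq k ^ 2 := pow_pos (hMposseq k) 2
  have hDpos : (0:ℝ) < 9*(k:ℝ)^2*Mseq k^2 := by
    have := pow_pos hk0 2
    positivity
  have hstep1 : ∑ i ∈ G, (i:ℝ)^4 / (9*(k:ℝ)^2*Mseq k^2)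
      ≤ ∑ i ∈ G, A (i+1)/Mseq i := by
    apply Finset.sum_le_sum
    intro i hi
    exact term_bound i (Finset.mem_range.mp (Finset.mem_filter.mp hi).1)
  have hstep2 : ∑ i ∈ Finset.range G.card, (i:ℝ)^4 ≤ ∑ i ∈ G, (i:ℝ)^4 :=
    aux_sum_range_card_le (fun i => (i:ℝ)^4)
      (fun a b hab => by
        have : (a:ℝ) ≤ (b:ℝ) := by exact_mod_cast hab
        exact pow_le_pow_left₀ (by positivity) this 4)
      (fun n => by positivity) G.card G rfl
  have hstep3 := aux_pow4_sum G.card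
  have hm1 : 17*(k:ℝ)/24 ≤ (G.card:ℝ) - 1 := by linarith
  have hm0 : (0:ℝ) ≤ 17*(k:ℝ)/24 := by positivity
  have hpow : (17*(k:ℝ)/24)^5 ≤ ((G.card:ℝ)-1)^5 := pow_le_pow_left₀ hm0 hm1 5
  rw [ge_iff_le]
  calc (k:ℝ)^3/(3402*Mseq k^2)
      ≤ ((17*(k:ℝ)/24)^5/5)/(9*(k:ℝ)^2*Mseq k^2) := by
        rw [div_le_div_iff₀ (by positivity) hDpos]
        nlinarith [mul_pos (pow_pos hk0 5) hMk2]
    _ ≤ (((G.card:ℝ)-1)^5/5)/(9*(k:ℝ)^2*Mseq k^2) := by gcongr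
    _ ≤ (∑ i ∈ Finset.range G.card, (i:ℝ)^4)/(9*(k:ℝ)^2*Mseq k^2) := by gcongr
    _ = ∑ i ∈ Finset.range G.card, ((i:ℝ)^4/(9*(k:ℝ)^2*Mseq k^2)) :=
        Finset.sum_div _ _ _
    _ ≤ ∑ i ∈ G, ((i:ℝ)^4/(9*(k:ℝ)^2*Mseq k^2)) := by
        rw [← Finset.sum_div, ← Finset.sum_div]
        gcongr
    _ ≤ ∑ i ∈ G, A (i+1)/Mseq i := hstep1
end

section
/- In the AC-ACG setting, for every k ≥ 0 with y_{k+1} ≠ x̃_k and every u ∈ s: ((M_k − F_k)/2)·A_{k+1}·‖y_{k+1} − x̃_k‖² ≤ η_k(u) − η_{k+1}(u) + (m/2)·a_k·D², where F_k := 2·(f(y_{k+1}) − ℓ_f(y_{k+1}; x̃_k))/‖y_{k+1} − x̃_k‖² and η_j(u) := A_j·(φ(y_j) − φ(u)) + (1/2)·‖u − x_j‖². -/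
local notation "⟪" x ", " y "⟫" => @inner ℝ _ _ x y

lemma aux_norm_add_smul_sq {E : Type*} [NormedAddCommGroup E] [InnerProductSpace ℝ E]
    (p q : E) (t : ℝ) :
    ‖p + t • q‖ ^ 2 = ‖p‖ ^ 2 + 2 * t * ⟪p, q⟫ + t ^ 2 * ‖q‖ ^ 2 := by
  rw [norm_add_sq_real, real_inner_smul_right, norm_smul, mul_pow, Real.norm_eq_abs, sq_abs]
  ring

lemma aux_norm_comb {E : Type*} [NormedAddCommGroup E] [InnerProductSpace ℝ E]
    (u yy xx : E) (l mu : ℝ) (hlm : l + mu = 1) :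
    ‖u - (l • yy + mu • xx)‖ ^ 2
      = l * ‖u - yy‖ ^ 2 + mu * ‖u - xx‖ ^ 2 - l * mu * ‖yy - xx‖ ^ 2 := by
  have hl : l = 1 - mu := by linarith
  subst hl
  have h1 : u - ((1 - mu) • yy + mu • xx) = (u - yy) + mu • (yy - xx) := by module
  have h2 : u - xx = (u - yy) + (1 : ℝ) • (yy - xx) := by module
  rw [h1, h2, aux_norm_add_smul_sq, aux_norm_add_smul_sq]
  ring

lemma aux_three_point {E : Type*} [NormedAddCommGroup E] [InnerProductSpace ℝ E]
    {s : Set E} (hs : Convex ℝ s) (g : E → ℝ)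
    (hg : ∀ p ∈ s, ∀ q ∈ s, ∀ t : ℝ, 0 ≤ t → t ≤ 1 →
      g ((1 - t) • p + t • q) ≤ (1 - t) * g p + t * g q)
    {z : E} (hz : z ∈ s) (x0 : E)
    (hmin : ∀ w ∈ s, g z + 1 / 2 * ‖z - x0‖ ^ 2 ≤ g w + 1 / 2 * ‖w - x0‖ ^ 2) :
    ∀ w ∈ s, g z + 1 / 2 * ‖z - x0‖ ^ 2 + 1 / 2 * ‖w - z‖ ^ 2
      ≤ g w + 1 / 2 * ‖w - x0‖ ^ 2 := by
  intro w hw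
  have hkey : ∀ t : ℝ, 0 < t → t ≤ 1 →
      0 ≤ (g w - g z + ⟪z - x0, w - z⟫) + t / 2 * ‖w - z‖ ^ 2 := by
    intro t ht0 ht1
    have hmem : (1 - t) • z + t • w ∈ s := hs hz hw (by linarith) ht0.le (by ring)
    have h1 := hmin _ hmem
    have h2 := hg z hz w hw t ht0.le ht1
    have h3 : ((1 - t) • z + t • w) - x0 = (z - x0) + t • (w - z) := by module
    rw [h3, aux_norm_add_smul_sq] at h1
    have h4 : 0 ≤ t * ((g w - g z + ⟪z - x0, w - z⟫) + t / 2 * ‖w - z‖ ^ 2) := by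
      nlinarith [h1, h2]
    exact (mul_le_mul_iff_right₀ ht0).mp (by simpa using h4)
  have hc0 : 0 ≤ g w - g z + ⟪z - x0, w - z⟫ := by
    rcases eq_or_lt_of_le (by positivity : (0:ℝ) ≤ ‖w - z‖ ^ 2) with hn | hn
    · have := hkey 1 one_pos le_rfl
      rw [← hn] at this; linarith
    · by_contra hneg
      push_neg at hneg
      set c := g w - g z + ⟪z - x0, w - z⟫ with hc
      have ht : 0 < min 1 (-c / ‖w - z‖ ^ 2) := lt_min one_pos (div_pos (by linarith) hn)
      have h6 := hkey _ ht (min_le_left _ _)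
      have h7 : min 1 (-c / ‖w - z‖ ^ 2) / 2 * ‖w - z‖ ^ 2
          ≤ (-c / ‖w - z‖ ^ 2) / 2 * ‖w - z‖ ^ 2 := by
        have := min_le_right 1 (-c / ‖w - z‖ ^ 2)
        nlinarith
      have h8 : (-c / ‖w - z‖ ^ 2) / 2 * ‖w - z‖ ^ 2 = -c / 2 := by
        rw [div_div, div_mul_eq_mul_div, mul_comm (‖w - z‖ ^ 2) 2, mul_div_mul_right _ _ hn.ne']
      linarith
  have hexp : ‖w - x0‖ ^ 2 = ‖z - x0‖ ^ 2 + 2 * ⟪z - x0, w - z⟫ + ‖w - z‖ ^ 2 := by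
    have h9 : w - x0 = (z - x0) + (1 : ℝ) • (w - z) := by module
    rw [h9, aux_norm_add_smul_sq]; ring
  rw [hexp]; linarith

set_option maxHeartbeats 4000000 in
/-- Lemma 2: the key recursive potential inequality of AC-ACG. -/
theorem stmt10 {E : Type*} [NormedAddCommGroup E] [InnerProductSpace ℝ E]
    (s : Set E) (hs : Convex ℝ s) (hsne : s.Nonempty)
    (D : ℝ) (hD : 0 < D) (hdiam : ∀ u ∈ s, ∀ u' ∈ s, ‖u - u'‖ ≤ D)
    (f : E → ℝ) (f' : E → E) (hf : ∀ z : E, HasFDerivAt f ((innerSL ℝ) (f' z)) z)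
    (m Mbar : ℝ) (hm : 0 ≤ m) (hMbar : 0 < Mbar)
    (hlower : ∀ u ∈ s, ∀ u' ∈ s,
      -(m / 2) * ‖u - u'‖ ^ 2 ≤ f u - f u' - (inner ℝ (f' u') (u - u') : ℝ))
    (hlip : ∀ u ∈ s, ∀ u' ∈ s, ‖f' u - f' u'‖ ≤ Mbar * ‖u - u'‖)
    (h : E → ℝ) (hh : ConvexOn ℝ s h)
    (γ M α : ℝ) (hγ0 : 0 < γ) (hγ1 : γ < 1) (hMM : Mbar ≤ M)
    (hα : α = 0.9 / 8 * (1 + 1 / (0.9 * γ))⁻¹)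
    (x y yg xt v : ℕ → E) (A a Mseq C Cavg : ℕ → ℝ)
    (hx0 : x 0 ∈ s) (hy0 : y 0 = x 0) (hA0 : A 0 = 0) (hM0 : Mseq 0 = γ * M)
    (ha : ∀ k, a k = (1 + Real.sqrt (1 + 4 * Mseq k * A k)) / (2 * Mseq k))
    (hA : ∀ k, A (k + 1) = A k + a k)
    (hxt : ∀ k, xt k = (A (k + 1))⁻¹ • (A k • y k + a k • x k))
    (hyg_mem : ∀ k, yg (k + 1) ∈ s)
    (hyg_min : ∀ k, ∀ u ∈ s,
      f (xt k) + (inner ℝ (f' (xt k)) (yg (k + 1) - xt k) : ℝ) + h (yg (k + 1))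
          + Mseq k / 2 * ‖yg (k + 1) - xt k‖ ^ 2
        ≤ f (xt k) + (inner ℝ (f' (xt k)) (u - xt k) : ℝ) + h u
          + Mseq k / 2 * ‖u - xt k‖ ^ 2)
    (hx_mem : ∀ k, x (k + 1) ∈ s)
    (hx_min : ∀ k, ∀ u ∈ s,
      a k * (f (xt k) + (inner ℝ (f' (xt k)) (x (k + 1) - xt k) : ℝ) + h (x (k + 1)))
          + 1 / 2 * ‖x (k + 1) - x k‖ ^ 2
        ≤ a k * (f (xt k) + (inner ℝ (f' (xt k)) (u - xt k) : ℝ) + h u)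
          + 1 / 2 * ‖u - x k‖ ^ 2)
    (hv : ∀ k, v (k + 1) = Mseq k • (xt k - yg (k + 1)) + f' (yg (k + 1)) - f' (xt k))
    (hne : ∀ k, yg (k + 1) ≠ xt k)
    (hC : ∀ k, C k = max
      (2 * (f (yg (k + 1)) - (f (xt k) + (inner ℝ (f' (xt k)) (yg (k + 1) - xt k) : ℝ)))
        / ‖yg (k + 1) - xt k‖ ^ 2)
      (‖f' (yg (k + 1)) - f' (xt k)‖ / ‖yg (k + 1) - xt k‖))
    (hCavg : ∀ k, Cavg k = (1 / ((k : ℝ) + 1)) * ∑ j ∈ Finset.range (k + 1), C j)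
    (hMsucc : ∀ k, Mseq (k + 1) = max (Cavg k / α) (γ * M))
    (hy : ∀ k, y (k + 1) =
      if 0.9 * Mseq k < C k then (A (k + 1))⁻¹ • (A k • y k + a k • x (k + 1))
      else yg (k + 1))
     :
    ∀ k : ℕ, y (k + 1) ≠ xt k → ∀ u ∈ s,
      (Mseq k -
          2 * (f (y (k + 1)) - (f (xt k) + (inner ℝ (f' (xt k)) (y (k + 1) - xt k) : ℝ)))
            / ‖y (k + 1) - xt k‖ ^ 2) / 2
          * A (k + 1) * ‖y (k + 1) - xt k‖ ^ 2
        ≤ (A k * ((f (y k) + h (y k)) - (f u + h u)) + 1 / 2 * ‖u - x k‖ ^ 2)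
          - (A (k + 1) * ((f (y (k + 1)) + h (y (k + 1))) - (f u + h u))
              + 1 / 2 * ‖u - x (k + 1)‖ ^ 2)
          + m / 2 * a k * D ^ 2 := by
  -- basic positivity facts
  have hMpos : ∀ k, 0 < Mseq k := by
    intro k
    have hM : 0 < γ * M := mul_pos hγ0 (lt_of_lt_of_le hMbar hMM)
    cases k with
    | zero => rw [hM0]; exact hM
    | succ n => rw [hMsucc n]; exact lt_of_lt_of_le hM (le_max_right _ _)
  have hapos : ∀ k, 0 < a k := by
    intro k
    rw [ha k]
    have h1 := Real.sqrt_nonneg (1 + 4 * Mseq k * A k)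
    exact div_pos (by linarith) (by linarith [hMpos k])
  have hAnn : ∀ k, 0 ≤ A k := by
    intro k; induction k with
    | zero => rw [hA0]
    | succ n ih => rw [hA n]; linarith [hapos n]
  have hA1pos : ∀ k, 0 < A (k + 1) := by
    intro k; rw [hA k]; linarith [hAnn k, hapos k]
  have hMa : ∀ k, Mseq k * a k ^ 2 = A (k + 1) := by
    intro k
    have hnn : (0:ℝ) ≤ 1 + 4 * Mseq k * A k := by nlinarith [hMpos k, hAnn k]
    have hsq := Real.sq_sqrt hnn
    have hM := hMpos k
    rw [hA k, ha k]
    field_simp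
    rw [mul_comm 4 (Mseq k)] at hsq
    nlinarith [hsq]
  have hxs : ∀ k, x k ∈ s := by
    intro k; cases k with
    | zero => exact hx0
    | succ n => exact hx_mem n
  have hsmul : ∀ (k : ℕ) (p q : E), (A (k + 1))⁻¹ • (A k • p + a k • q)
      = (A k / A (k + 1)) • p + (a k / A (k + 1)) • q := by
    intro k p q
    rw [smul_add, smul_smul, smul_smul, div_eq_inv_mul, div_eq_inv_mul]
  have hlamnn : ∀ k, 0 ≤ A k / A (k + 1) := fun k => div_nonneg (hAnn k) (hA1pos k).le
  have hmunn : ∀ k, 0 ≤ a k / A (k + 1) := fun k => div_nonneg (hapos k).le (hA1pos k).le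
  have hlmsum : ∀ k, A k / A (k + 1) + a k / A (k + 1) = 1 := by
    intro k; rw [← add_div, ← hA k, div_self (hA1pos k).ne']
  have hys : ∀ k, y k ∈ s := by
    intro k; induction k with
    | zero => rw [hy0]; exact hx0
    | succ n ih =>
      rw [hy n]
      split_ifs with hc
      · rw [hsmul]; exact hs ih (hx_mem n) (hlamnn n) (hmunn n) (hlmsum n)
      · exact hyg_mem n
  have hxts : ∀ k, xt k ∈ s := by
    intro k; rw [hxt k, hsmul]
    exact hs (hys k) (hxs k) (hlamnn k) (hmunn k) (hlmsum k)
  -- main argument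
  intro k hne' u hu
  have hXw : xt k = (A k / A (k + 1)) • y k + (a k / A (k + 1)) • x k := by
    rw [hxt k, hsmul]
  have hwmem : (A k / A (k + 1)) • y k + (a k / A (k + 1)) • x (k + 1) ∈ s :=
    hs (hys k) (hx_mem k) (hlamnn k) (hmunn k) (hlmsum k)
  have hn1pos : 0 < ‖y (k + 1) - xt k‖ ^ 2 := by
    have h0 := sub_ne_zero_of_ne hne'
    exact pow_pos (norm_pos_iff.mpr h0) 2
  -- convexity of the linearized objective
  have hGconv : ∀ p ∈ s, ∀ q ∈ s, ∀ t1 t2 : ℝ, 0 ≤ t1 → 0 ≤ t2 → t1 + t2 = 1 →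
      f (xt k) + (inner ℝ (f' (xt k)) ((t1 • p + t2 • q) - xt k) : ℝ) + h (t1 • p + t2 • q)
        ≤ t1 * (f (xt k) + (inner ℝ (f' (xt k)) (p - xt k) : ℝ) + h p)
          + t2 * (f (xt k) + (inner ℝ (f' (xt k)) (q - xt k) : ℝ) + h q) := by
    intro p hp q hq t1 t2 h1 h2 h12
    have hhc := hh.2 hp hq h1 h2 h12
    simp only [smul_eq_mul] at hhc
    have ht1 : t1 = 1 - t2 := by linarith
    subst ht1
    have hv2 : ((1 - t2) • p + t2 • q) - xt k = (1 - t2) • (p - xt k) + t2 • (q - xt k) := by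
      module
    rw [hv2, inner_add_right, real_inner_smul_right, real_inner_smul_right]
    linarith [hhc]
  -- three point inequality for the x-step
  have hgmul : ∀ p ∈ s, ∀ q ∈ s, ∀ t : ℝ, 0 ≤ t → t ≤ 1 →
      a k * (f (xt k) + (inner ℝ (f' (xt k)) (((1 - t) • p + t • q) - xt k) : ℝ)
          + h ((1 - t) • p + t • q))
        ≤ (1 - t) * (a k * (f (xt k) + (inner ℝ (f' (xt k)) (p - xt k) : ℝ) + h p))
          + t * (a k * (f (xt k) + (inner ℝ (f' (xt k)) (q - xt k) : ℝ) + h q)) := by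
    intro p hp q hq t ht0 ht1
    have h1 := hGconv p hp q hq (1 - t) t (by linarith) ht0 (by ring)
    have h2 := mul_le_mul_of_nonneg_left h1 (hapos k).le
    linarith [h2]
  have h3pt : a k * (f (xt k) + (inner ℝ (f' (xt k)) (x (k + 1) - xt k) : ℝ) + h (x (k + 1)))
        + 1 / 2 * ‖x (k + 1) - x k‖ ^ 2 + 1 / 2 * ‖u - x (k + 1)‖ ^ 2
      ≤ a k * (f (xt k) + (inner ℝ (f' (xt k)) (u - xt k) : ℝ) + h u)
        + 1 / 2 * ‖u - x k‖ ^ 2 :=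
    aux_three_point hs
      (fun p => a k * (f (xt k) + (inner ℝ (f' (xt k)) (p - xt k) : ℝ) + h p))
      hgmul (hx_mem k) (x k) (hx_min k) u hu
  -- step 1: comparison at the candidate point w
  have hstep1 : f (xt k) + (inner ℝ (f' (xt k)) (y (k + 1) - xt k) : ℝ) + h (y (k + 1))
        + Mseq k / 2 * ‖y (k + 1) - xt k‖ ^ 2
      ≤ f (xt k) + (inner ℝ (f' (xt k))
            (((A k / A (k + 1)) • y k + (a k / A (k + 1)) • x (k + 1)) - xt k) : ℝ)
        + h ((A k / A (k + 1)) • y k + (a k / A (k + 1)) • x (k + 1))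
        + Mseq k / 2 * ‖((A k / A (k + 1)) • y k + (a k / A (k + 1)) • x (k + 1)) - xt k‖ ^ 2 := by
    have hyy := hy k
    by_cases hcase : 0.9 * Mseq k < C k
    · rw [if_pos hcase] at hyy
      rw [hyy, hsmul]
    · rw [if_neg hcase] at hyy
      rw [hyy]
      exact hyg_min k _ hwmem
  -- norms of the combination differences
  have hwX : ((A k / A (k + 1)) • y k + (a k / A (k + 1)) • x (k + 1)) - xt k
      = (a k / A (k + 1)) • (x (k + 1) - x k) := by
    rw [hXw]; module
  have hwXn : ‖((A k / A (k + 1)) • y k + (a k / A (k + 1)) • x (k + 1)) - xt k‖ ^ 2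
      = (a k / A (k + 1)) ^ 2 * ‖x (k + 1) - x k‖ ^ 2 := by
    rw [hwX, norm_smul, mul_pow, Real.norm_eq_abs, sq_abs]
  have hyXn : ‖y k - xt k‖ ^ 2 = (a k / A (k + 1)) ^ 2 * ‖y k - x k‖ ^ 2 := by
    have h1 : y k - xt k = (a k / A (k + 1)) • (y k - x k) := by
      rw [hXw]
      have hl : A k / A (k + 1) = 1 - a k / A (k + 1) := by linarith [hlmsum k]
      rw [hl]; module
    rw [h1, norm_smul, mul_pow, Real.norm_eq_abs, sq_abs]
  have huXn : ‖u - xt k‖ ^ 2 = (A k / A (k + 1)) * ‖u - y k‖ ^ 2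
      + (a k / A (k + 1)) * ‖u - x k‖ ^ 2
      - (A k / A (k + 1)) * (a k / A (k + 1)) * ‖y k - x k‖ ^ 2 := by
    rw [hXw]; exact aux_norm_comb u (y k) (x k) _ _ (hlmsum k)
  -- coefficient identities
  have hclam : A (k + 1) * (A k / A (k + 1)) = A k := by
    rw [mul_comm]; exact div_mul_cancel₀ _ (hA1pos k).ne'
  have hcmu : A (k + 1) * (a k / A (k + 1)) = a k := by
    rw [mul_comm]; exact div_mul_cancel₀ _ (hA1pos k).ne'
  have hcoef : A (k + 1) * (Mseq k / 2) * (a k / A (k + 1)) ^ 2 = 1 / 2 := by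
    have h1 := hMa k
    rw [div_pow, ← h1]
    have h4 : a k ≠ 0 := (hapos k).ne'
    have h5 : Mseq k ≠ 0 := (hMpos k).ne'
    field_simp
  have hAmu : A k * (a k / A (k + 1)) ^ 2
      = a k * ((A k / A (k + 1)) * (a k / A (k + 1))) := by
    field_simp
  -- the distance bound
  have hduy : ‖u - y k‖ ^ 2 ≤ D ^ 2 :=
    pow_le_pow_left₀ (norm_nonneg _) (hdiam u hu (y k) (hys k)) 2
  have hdux : ‖u - x k‖ ^ 2 ≤ D ^ 2 :=
    pow_le_pow_left₀ (norm_nonneg _) (hdiam u hu (x k) (hxs k)) 2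
  have hdist : A k * ‖y k - xt k‖ ^ 2 + a k * ‖u - xt k‖ ^ 2 ≤ a k * D ^ 2 := by
    rw [hyXn, huXn]
    have key : A k * ((a k / A (k + 1)) ^ 2 * ‖y k - x k‖ ^ 2)
        + a k * ((A k / A (k + 1)) * ‖u - y k‖ ^ 2 + (a k / A (k + 1)) * ‖u - x k‖ ^ 2
          - (A k / A (k + 1)) * (a k / A (k + 1)) * ‖y k - x k‖ ^ 2)
        = a k * ((A k / A (k + 1)) * ‖u - y k‖ ^ 2 + (a k / A (k + 1)) * ‖u - x k‖ ^ 2) := by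
      linear_combination ‖y k - x k‖ ^ 2 * hAmu
    rw [key]
    have h1 : (A k / A (k + 1)) * ‖u - y k‖ ^ 2 + (a k / A (k + 1)) * ‖u - x k‖ ^ 2
        ≤ D ^ 2 := by
      have h2 := mul_le_mul_of_nonneg_left hduy (hlamnn k)
      have h3 := mul_le_mul_of_nonneg_left hdux (hmunn k)
      have h4 := hlmsum k
      nlinarith [h2, h3]
    exact mul_le_mul_of_nonneg_left h1 (hapos k).le
  -- weak convexity lower bounds
  have hly := hlower (y k) (hys k) (xt k) (hxts k)
  have hlu := hlower u hu (xt k) (hxts k)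
  have hGy : A k * (f (xt k) + (inner ℝ (f' (xt k)) (y k - xt k) : ℝ) + h (y k))
      ≤ A k * (f (y k) + h (y k) + m / 2 * ‖y k - xt k‖ ^ 2) :=
    mul_le_mul_of_nonneg_left (by linarith [hly]) (hAnn k)
  have hGu : a k * (f (xt k) + (inner ℝ (f' (xt k)) (u - xt k) : ℝ) + h u)
      ≤ a k * (f u + h u + m / 2 * ‖u - xt k‖ ^ 2) :=
    mul_le_mul_of_nonneg_left (by linarith [hlu]) (hapos k).le
  have hdist' := mul_le_mul_of_nonneg_left hdist (by linarith : (0:ℝ) ≤ m / 2)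
  -- multiplied versions of step1 and step3
  have hstep1' := mul_le_mul_of_nonneg_left hstep1 (hA1pos k).le
  have hstep3 := hGconv (y k) (hys k) (x (k + 1)) (hx_mem k)
    (A k / A (k + 1)) (a k / A (k + 1)) (hlamnn k) (hmunn k) (hlmsum k)
  have hstep3' := mul_le_mul_of_nonneg_left hstep3 (hA1pos k).le
  have hRW : A (k + 1) * ((A k / A (k + 1)) * (f (xt k)
        + (inner ℝ (f' (xt k)) (y k - xt k) : ℝ) + h (y k))
      + (a k / A (k + 1)) * (f (xt k)
        + (inner ℝ (f' (xt k)) (x (k + 1) - xt k) : ℝ) + h (x (k + 1))))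
      = A k * (f (xt k) + (inner ℝ (f' (xt k)) (y k - xt k) : ℝ) + h (y k))
        + a k * (f (xt k) + (inner ℝ (f' (xt k)) (x (k + 1) - xt k) : ℝ) + h (x (k + 1))) := by
    linear_combination (f (xt k) + (inner ℝ (f' (xt k)) (y k - xt k) : ℝ) + h (y k)) * hclam
      + (f (xt k) + (inner ℝ (f' (xt k)) (x (k + 1) - xt k) : ℝ) + h (x (k + 1))) * hcmu
  have hq : A (k + 1) * (Mseq k / 2
        * ‖((A k / A (k + 1)) • y k + (a k / A (k + 1)) • x (k + 1)) - xt k‖ ^ 2)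
      = 1 / 2 * ‖x (k + 1) - x k‖ ^ 2 := by
    rw [hwXn]; linear_combination ‖x (k + 1) - x k‖ ^ 2 * hcoef
  have hAu : A (k + 1) * (f u + h u) = A k * (f u + h u) + a k * (f u + h u) := by
    rw [hA k]; ring
  -- abbreviate large atoms
  set lam := A k / A (k + 1) with hldef
  set mu := a k / A (k + 1) with hmdef
  set W := lam • y k + mu • x (k + 1) with hWdef
  set P := f (xt k) with hPdef
  set Q1 := (inner ℝ (f' (xt k)) (y (k + 1) - xt k) : ℝ) with hQ1def
  set QW := (inner ℝ (f' (xt k)) (W - xt k) : ℝ) with hQWdef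
  set Qy := (inner ℝ (f' (xt k)) (y k - xt k) : ℝ) with hQydef
  set Qx := (inner ℝ (f' (xt k)) (x (k + 1) - xt k) : ℝ) with hQxdef
  set Qu := (inner ℝ (f' (xt k)) (u - xt k) : ℝ) with hQudef
  set N := ‖y (k + 1) - xt k‖ ^ 2 with hNdef
  set Ndx := ‖x (k + 1) - x k‖ ^ 2 with hNdxdef
  set Nu1 := ‖u - x (k + 1)‖ ^ 2 with hNu1def
  set Nu0 := ‖u - x k‖ ^ 2 with hNu0def
  set NyX := ‖y k - xt k‖ ^ 2 with hNyXdef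
  set NuX := ‖u - xt k‖ ^ 2 with hNuXdef
  set NW := ‖W - xt k‖ ^ 2 with hNWdef
  have hLHS : (Mseq k - 2 * (f (y (k + 1)) - (P + Q1)) / N) / 2 * A (k + 1) * N
      = Mseq k / 2 * A (k + 1) * N - A (k + 1) * (f (y (k + 1)) - (P + Q1)) := by
    have hN : N ≠ 0 := hn1pos.ne'
    field_simp
  linarith only [hstep1', hq, hstep3', hRW, h3pt, hGy, hGu, hdist', hAu, hLHS]
end

section
/- In the AC-ACG setting, for every k ≥ 0 with C_k ≤ 0.9·M_k (a good iteration) and every u ∈ s: (A_{k+1}/(72.2·M_k))·‖v_{k+1}‖² ≤ η_k(u) − η_{k+1}(u) + (m/2)·a_k·D², where η_j(u) := A_j·(φ(y_j) − φ(u)) + (1/2)·‖u − x_j‖². -/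
set_option maxHeartbeats 1600000

section aux
variable {E : Type*} [NormedAddCommGroup E] [InnerProductSpace ℝ E]

lemma combo_norm_sq (a b : E) (t : ℝ) :
    ‖(1 - t) • a + t • b‖ ^ 2
      = (1 - t) * ‖a‖ ^ 2 + t * ‖b‖ ^ 2 - t * (1 - t) * ‖b - a‖ ^ 2 := by
  have h1 : ‖(1 - t) • a + t • b‖ ^ 2
      = (1-t)^2*‖a‖^2 + 2*((1-t)*t)*(inner ℝ a b : ℝ) + t^2*‖b‖^2 := by
    rw [← real_inner_self_eq_norm_sq]
    simp only [inner_add_left, inner_add_right, real_inner_smul_left, real_inner_smul_right]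
    rw [← real_inner_self_eq_norm_sq, ← real_inner_self_eq_norm_sq, real_inner_comm b a]
    ring
  have h2 : ‖b - a‖^2 = ‖b‖^2 - 2*(inner ℝ a b : ℝ) + ‖a‖^2 := by
    rw [← real_inner_self_eq_norm_sq]
    simp only [inner_sub_left, inner_sub_right]
    rw [← real_inner_self_eq_norm_sq, ← real_inner_self_eq_norm_sq, real_inner_comm b a]
    ring
  rw [h1, h2]; ring

lemma strong_min {s : Set E} (hs : Convex ℝ s) {g : E → ℝ} (hg : ConvexOn ℝ s g)
    {p z : E} (hz : z ∈ s)
    (hmin : ∀ u ∈ s, g z + 1/2 * ‖z - p‖ ^ 2 ≤ g u + 1/2 * ‖u - p‖ ^ 2)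
    {u : E} (hu : u ∈ s) :
    g z + 1/2 * ‖z - p‖ ^ 2 + 1/2 * ‖u - z‖ ^ 2 ≤ g u + 1/2 * ‖u - p‖ ^ 2 := by
  have key : ∀ t : ℝ, 0 < t → t < 1 →
      g z + 1/2 * ‖z - p‖ ^ 2 + (1 - t)/2 * ‖u - z‖ ^ 2 ≤ g u + 1/2 * ‖u - p‖ ^ 2 := by
    intro t ht0 ht1
    have hmem : (1 - t) • z + t • u ∈ s := hs hz hu (by linarith) ht0.le (by ring)
    have h1 := hmin _ hmem
    have h2 := hg.2 hz hu (by linarith : (0:ℝ) ≤ 1 - t) ht0.le (by ring)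
    have h3 : ((1 - t) • z + t • u) - p = (1 - t) • (z - p) + t • (u - p) := by
      rw [smul_sub, smul_sub]; module
    have h4 : ‖((1 - t) • z + t • u) - p‖^2
        = (1-t)*‖z-p‖^2 + t*‖u-p‖^2 - t*(1-t)*‖(u-p)-(z-p)‖^2 := by
      rw [h3, combo_norm_sq]
    have h5 : (u - p) - (z - p) = u - z := by abel
    rw [h5] at h4
    simp only [smul_eq_mul] at h2
    have h6 : t * (g z + 1/2*‖z-p‖^2 + (1-t)/2*‖u-z‖^2) ≤ t * (g u + 1/2*‖u-p‖^2) := by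
      nlinarith [h1, h2, h4]
    exact le_of_mul_le_mul_left h6 ht0
  by_contra hcon
  push_neg at hcon
  have hq : 0 ≤ ‖u - z‖^2 := by positivity
  have hR0 : 0 < g z + 1/2*‖z-p‖^2 + 1/2*‖u-z‖^2 - (g u + 1/2*‖u-p‖^2) := by linarith
  rcases eq_or_lt_of_le hq with h0 | h0
  · linarith [key (1/2) (by norm_num) (by norm_num), h0]
  · set R := g z + 1/2*‖z-p‖^2 + 1/2*‖u-z‖^2 - (g u + 1/2*‖u-p‖^2) with hRdef
    have ht0 : 0 < min (1/2) (R / ‖u - z‖^2) := lt_min (by norm_num) (div_pos hR0 h0)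
    have ht1 : min (1/2) (R / ‖u - z‖^2) < 1 :=
      lt_of_le_of_lt (min_le_left _ _) (by norm_num)
    have h7 := key _ ht0 ht1
    have h8 : (min (1/2) (R / ‖u - z‖^2)) * ‖u - z‖^2 ≤ R :=
      (le_div_iff₀ h0).mp (min_le_right _ _)
    linarith [h7, h8, hR0]

end aux



/-- Lemma 3(a): potential inequality at good iterations. -/
theorem stmt11 {E : Type*} [NormedAddCommGroup E] [InnerProductSpace ℝ E]
    (s : Set E) (hs : Convex ℝ s) (hsne : s.Nonempty)
    (D : ℝ) (hD : 0 < D) (hdiam : ∀ u ∈ s, ∀ u' ∈ s, ‖u - u'‖ ≤ D)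
    (f : E → ℝ) (f' : E → E) (hf : ∀ z : E, HasFDerivAt f ((innerSL ℝ) (f' z)) z)
    (m Mbar : ℝ) (hm : 0 ≤ m) (hMbar : 0 < Mbar)
    (hlower : ∀ u ∈ s, ∀ u' ∈ s,
      -(m / 2) * ‖u - u'‖ ^ 2 ≤ f u - f u' - (inner ℝ (f' u') (u - u') : ℝ))
    (hlip : ∀ u ∈ s, ∀ u' ∈ s, ‖f' u - f' u'‖ ≤ Mbar * ‖u - u'‖)
    (h : E → ℝ) (hh : ConvexOn ℝ s h)
    (γ M α : ℝ) (hγ0 : 0 < γ) (hγ1 : γ < 1) (hMM : Mbar ≤ M)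
    (hα : α = 0.9 / 8 * (1 + 1 / (0.9 * γ))⁻¹)
    (x y yg xt v : ℕ → E) (A a Mseq C Cavg : ℕ → ℝ)
    (hx0 : x 0 ∈ s) (hy0 : y 0 = x 0) (hA0 : A 0 = 0) (hM0 : Mseq 0 = γ * M)
    (ha : ∀ k, a k = (1 + Real.sqrt (1 + 4 * Mseq k * A k)) / (2 * Mseq k))
    (hA : ∀ k, A (k + 1) = A k + a k)
    (hxt : ∀ k, xt k = (A (k + 1))⁻¹ • (A k • y k + a k • x k))
    (hyg_mem : ∀ k, yg (k + 1) ∈ s)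
    (hyg_min : ∀ k, ∀ u ∈ s,
      f (xt k) + (inner ℝ (f' (xt k)) (yg (k + 1) - xt k) : ℝ) + h (yg (k + 1))
          + Mseq k / 2 * ‖yg (k + 1) - xt k‖ ^ 2
        ≤ f (xt k) + (inner ℝ (f' (xt k)) (u - xt k) : ℝ) + h u
          + Mseq k / 2 * ‖u - xt k‖ ^ 2)
    (hx_mem : ∀ k, x (k + 1) ∈ s)
    (hx_min : ∀ k, ∀ u ∈ s,
      a k * (f (xt k) + (inner ℝ (f' (xt k)) (x (k + 1) - xt k) : ℝ) + h (x (k + 1)))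
          + 1 / 2 * ‖x (k + 1) - x k‖ ^ 2
        ≤ a k * (f (xt k) + (inner ℝ (f' (xt k)) (u - xt k) : ℝ) + h u)
          + 1 / 2 * ‖u - x k‖ ^ 2)
    (hv : ∀ k, v (k + 1) = Mseq k • (xt k - yg (k + 1)) + f' (yg (k + 1)) - f' (xt k))
    (hne : ∀ k, yg (k + 1) ≠ xt k)
    (hC : ∀ k, C k = max
      (2 * (f (yg (k + 1)) - (f (xt k) + (inner ℝ (f' (xt k)) (yg (k + 1) - xt k) : ℝ)))
        / ‖yg (k + 1) - xt k‖ ^ 2)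
      (‖f' (yg (k + 1)) - f' (xt k)‖ / ‖yg (k + 1) - xt k‖))
    (hCavg : ∀ k, Cavg k = (1 / ((k : ℝ) + 1)) * ∑ j ∈ Finset.range (k + 1), C j)
    (hMsucc : ∀ k, Mseq (k + 1) = max (Cavg k / α) (γ * M))
    (hy : ∀ k, y (k + 1) =
      if 0.9 * Mseq k < C k then (A (k + 1))⁻¹ • (A k • y k + a k • x (k + 1))
      else yg (k + 1))
     :
    ∀ k : ℕ, C k ≤ 0.9 * Mseq k → ∀ u ∈ s,
      A (k + 1) / (72.2 * Mseq k) * ‖v (k + 1)‖ ^ 2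
        ≤ (A k * ((f (y k) + h (y k)) - (f u + h u)) + 1 / 2 * ‖u - x k‖ ^ 2)
          - (A (k + 1) * ((f (y (k + 1)) + h (y (k + 1))) - (f u + h u))
              + 1 / 2 * ‖u - x (k + 1)‖ ^ 2)
          + m / 2 * a k * D ^ 2 := by

  -- basic positivity facts
  have hM0pos : 0 < γ * M := mul_pos hγ0 (lt_of_lt_of_le hMbar hMM)
  have hMpos : ∀ k, 0 < Mseq k := by
    intro k
    cases k with
    | zero => rw [hM0]; exact hM0pos
    | succ n => rw [hMsucc n]; exact lt_of_lt_of_le hM0pos (le_max_right _ _)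
  have hbase : ∀ k, 0 ≤ A k ∧ x k ∈ s ∧ y k ∈ s := by
    intro k
    induction k with
    | zero => exact ⟨le_of_eq hA0.symm, hx0, hy0 ▸ hx0⟩
    | succ n ih =>
      obtain ⟨hAn, hxn, hyn⟩ := ih
      have hap : 0 < a n := by
        rw [ha n]
        apply div_pos
        · have := Real.sqrt_nonneg (1 + 4 * Mseq n * A n); linarith
        · linarith [hMpos n]
      have hA1 : 0 < A (n+1) := by rw [hA n]; linarith
      refine ⟨hA1.le, hx_mem n, ?_⟩
      rw [hy n]
      split
      · have hsum : A n / A (n+1) + a n / A (n+1) = 1 := by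
          rw [← add_div, ← hA n, div_self hA1.ne']
        have hmem := hs hyn (hx_mem n) (div_nonneg hAn hA1.le)
          (div_nonneg hap.le hA1.le) hsum
        simpa [smul_add, smul_smul, div_eq_inv_mul] using hmem
      · exact hyg_mem n
  have hapos : ∀ k, 0 < a k := by
    intro k
    obtain ⟨hAk, -, -⟩ := hbase k
    rw [ha k]
    apply div_pos
    · have := Real.sqrt_nonneg (1 + 4 * Mseq k * A k); linarith
    · linarith [hMpos k]
  have hquad : ∀ k, Mseq k * a k ^ 2 = A (k+1) := by
    intro k
    obtain ⟨hAk, -, -⟩ := hbase k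
    have hM := hMpos k
    have hnn : 0 ≤ 1 + 4 * Mseq k * A k := by positivity
    have hr : Real.sqrt (1 + 4 * Mseq k * A k) ^ 2 = 1 + 4 * Mseq k * A k :=
      Real.sq_sqrt hnn
    rw [hA k, ha k]
    set r := Real.sqrt (1 + 4 * Mseq k * A k) with hrd
    field_simp
    linear_combination hr
  intro k hgood u hu
  have hM := hMpos k
  obtain ⟨hAk, hxk, hyk⟩ := hbase k
  have hap := hapos k
  have hA1 : 0 < A (k+1) := by rw [hA k]; linarith
  have hAeq := hA k
  have hA1ne : A (k+1) ≠ 0 := by rw [hAeq]; intro hc; linarith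
  have hq' : Mseq k * a k ^ 2 = A k + a k := by rw [← hAeq]; exact hquad k
  have hnpos : 0 < ‖yg (k+1) - xt k‖ := by
    rw [norm_pos_iff]
    exact sub_ne_zero.mpr (hne k)
  have hN1 : 0 < ‖yg (k+1) - xt k‖ ^ 2 := by positivity
  have hygy : y (k+1) = yg (k+1) := by
    rw [hy k, if_neg (not_lt.mpr hgood)]
  rw [hC k] at hgood
  have good1 := le_trans (le_max_left _ _) hgood
  have good2 := le_trans (le_max_right _ _) hgood
  rw [div_le_iff₀ hN1] at good1
  rw [div_le_iff₀ hnpos] at good2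
  -- bound on v
  have hveq : v (k+1) = Mseq k • (xt k - yg (k+1)) + (f' (yg (k+1)) - f' (xt k)) := by
    rw [hv k, add_sub_assoc]
  have hvn : ‖v (k+1)‖ ≤ 1.9 * Mseq k * ‖yg (k+1) - xt k‖ := by
    rw [hveq]
    refine le_trans (norm_add_le _ _) ?_
    have e1 : ‖Mseq k • (xt k - yg (k+1))‖ = Mseq k * ‖yg (k+1) - xt k‖ := by
      rw [norm_smul, Real.norm_eq_abs, abs_of_pos hM, norm_sub_rev]
    rw [e1]
    linarith
  have Lfinal : A (k+1)/(72.2*Mseq k)*‖v (k+1)‖^2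
      ≤ Mseq k/20*(A (k+1)*‖yg (k+1) - xt k‖^2) := by
    have h1 : ‖v (k+1)‖^2 ≤ (1.9*Mseq k*‖yg (k+1) - xt k‖)^2 :=
      pow_le_pow_left₀ (norm_nonneg _) hvn 2
    have h2 : (0:ℝ) ≤ A (k+1)/(72.2*Mseq k) := by positivity
    calc A (k+1)/(72.2*Mseq k)*‖v (k+1)‖^2
        ≤ A (k+1)/(72.2*Mseq k)*((1.9*Mseq k*‖yg (k+1) - xt k‖)^2) :=
          mul_le_mul_of_nonneg_left h1 h2
      _ = Mseq k/20*(A (k+1)*‖yg (k+1) - xt k‖^2) := by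
          field_simp
          ring
  -- weights
  set lam := A k / A (k+1) with hlamd
  set mu := a k / A (k+1) with hmud
  have hlam0 : 0 ≤ lam := div_nonneg hAk hA1.le
  have hmu0 : 0 ≤ mu := div_nonneg hap.le hA1.le
  have hsum : lam + mu = 1 := by
    rw [hlamd, hmud, ← add_div, ← hAeq, div_self hA1.ne']
  have hlam1 : lam = 1 - mu := by linarith
  -- points
  have hTrep : xt k = lam • y k + mu • x k := by
    rw [hlamd, hmud, hxt k]
    simp [smul_add, smul_smul, div_eq_inv_mul]
  have hTmem : xt k ∈ s := by rw [hTrep]; exact hs hyk hxk hlam0 hmu0 hsum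
  have humem : lam • y k + mu • x (k+1) ∈ s := hs hyk (hx_mem k) hlam0 hmu0 hsum
  have hwmem : lam • y k + mu • u ∈ s := hs hyk hu hlam0 hmu0 hsum
  -- vector identities
  have nsq : ∀ (c : ℝ) (z : E), ‖c • z‖^2 = c^2*‖z‖^2 := fun c z => by
    rw [norm_smul, mul_pow, Real.norm_eq_abs, sq_abs]
  have hu'T : (lam • y k + mu • x (k+1)) - xt k = mu • (x (k+1) - x k) := by
    rw [hTrep]; module
  have hwT : (lam • y k + mu • u) - xt k = mu • (u - x k) := by
    rw [hTrep]; module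
  have hYw : y k - (lam • y k + mu • u) = mu • (y k - u) := by
    rw [hlam1]; module
  have huw : u - (lam • y k + mu • u) = lam • (u - y k) := by
    rw [hlam1]; module
  have hn1 : ‖(lam • y k + mu • x (k+1)) - xt k‖^2 = mu^2*‖x (k+1) - x k‖^2 := by
    rw [hu'T, nsq]
  have hn2 : ‖(lam • y k + mu • u) - xt k‖^2 = mu^2*‖u - x k‖^2 := by
    rw [hwT, nsq]
  have hn3 : ‖y k - (lam • y k + mu • u)‖^2 = mu^2*‖y k - u‖^2 := by
    rw [hYw, nsq]
  have hn4 : ‖u - (lam • y k + mu • u)‖^2 = lam^2*‖y k - u‖^2 := by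
    rw [huw, nsq, norm_sub_rev u (y k)]
  -- main inequalities
  have B1 := hyg_min k _ humem
  rw [hn1] at B1
  simp only [inner_sub_right, inner_add_right, real_inner_smul_right] at B1
  have S1 := mul_le_mul_of_nonneg_left B1 hA1.le
  simp only [inner_sub_right] at good1
  have S7 := mul_le_mul_of_nonneg_left good1 hA1.le
  have B3 := hh.2 hyk (hx_mem k) hlam0 hmu0 hsum
  simp only [smul_eq_mul] at B3
  have S3 := mul_le_mul_of_nonneg_left B3 hA1.le
  -- strong convexity for the x-subproblem
  have hcconv0 : ConvexOn ℝ s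
      (fun z => f (xt k) + (inner ℝ (f' (xt k)) (z - xt k) : ℝ) + h z) := by
    refine ⟨hs, fun p hp q hq aa bb ha' hb' hab => ?_⟩
    have hhc := hh.2 hp hq ha' hb' hab
    simp only [smul_eq_mul] at hhc ⊢
    simp only [inner_sub_right, inner_add_right, real_inner_smul_right]
    have e1 : aa * f (xt k) + bb * f (xt k) = f (xt k) := by
      rw [← add_mul, hab, one_mul]
    have e2 : aa * (inner ℝ (f' (xt k)) (xt k) : ℝ) + bb * (inner ℝ (f' (xt k)) (xt k) : ℝ)
        = (inner ℝ (f' (xt k)) (xt k) : ℝ) := by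
      rw [← add_mul, hab, one_mul]
    linarith [hhc, e1, e2]
  have hcconv : ConvexOn ℝ s
      (fun z => a k * (f (xt k) + (inner ℝ (f' (xt k)) (z - xt k) : ℝ) + h z)) := by
    have := hcconv0.smul hap.le
    simpa [smul_eq_mul] using this
  have B2 := strong_min hs hcconv (hx_mem k) (hx_min k) hu
  simp only [inner_sub_right] at B2
  -- lower curvature inequalities
  have B4 := hlower _ hwmem _ hTmem
  rw [hn2] at B4
  simp only [inner_sub_right, inner_add_right, real_inner_smul_right] at B4
  have S4 := mul_le_mul_of_nonneg_left B4 hA1.le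
  have B5 := hlower (y k) hyk _ hwmem
  rw [hn3] at B5
  simp only [inner_sub_right, inner_add_right, real_inner_smul_right] at B5
  have S5 := mul_le_mul_of_nonneg_left B5 hAk
  have B6 := hlower u hu _ hwmem
  rw [hn4] at B6
  simp only [inner_sub_right, inner_add_right, real_inner_smul_right] at B6
  have S6 := mul_le_mul_of_nonneg_left B6 hap.le
  -- scalar identities
  have q1 : A (k+1) * (lam * (inner ℝ (f' (xt k)) (y k) : ℝ))
      = A k * (inner ℝ (f' (xt k)) (y k) : ℝ) := by
    rw [hlamd]; field_simp
  have q2 : A (k+1) * (mu * (inner ℝ (f' (xt k)) (x (k+1)) : ℝ))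
      = a k * (inner ℝ (f' (xt k)) (x (k+1)) : ℝ) := by
    rw [hmud]; field_simp
  have q3 : A (k+1) * (Mseq k / 2 * (mu^2 * ‖x (k+1) - x k‖^2))
      = 1/2 * ‖x (k+1) - x k‖^2 := by
    rw [hmud, hAeq]
    field_simp
    linear_combination ‖x (k+1) - x k‖^2*hq'
  have q4 : A (k+1) * (lam * h (y k)) = A k * h (y k) := by
    rw [hlamd]; field_simp
  have q5 : A (k+1) * (mu * h (x (k+1))) = a k * h (x (k+1)) := by
    rw [hmud]; field_simp
  have q6 : A (k+1) * (mu * (inner ℝ (f' (xt k)) u : ℝ)) = a k * (inner ℝ (f' (xt k)) u : ℝ) := by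
    rw [hmud]; field_simp
  have E5 : A k * ((inner ℝ (f' (lam • y k + mu • u)) (y k) : ℝ)
        - (lam * (inner ℝ (f' (lam • y k + mu • u)) (y k) : ℝ)
            + mu * (inner ℝ (f' (lam • y k + mu • u)) u : ℝ)))
      + a k * ((inner ℝ (f' (lam • y k + mu • u)) u : ℝ)
        - (lam * (inner ℝ (f' (lam • y k + mu • u)) (y k) : ℝ)
            + mu * (inner ℝ (f' (lam • y k + mu • u)) u : ℝ))) = 0 := by
    rw [hlamd, hmud, hAeq]
    field_simp
    ring
  have Efw : A (k+1) * f (lam • y k + mu • u)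
      = A k * f (lam • y k + mu • u) + a k * f (lam • y k + mu • u) := by
    rw [hAeq]; ring
  -- the m-term bound
  have hb1 : ‖u - x k‖^2 ≤ D^2 :=
    pow_le_pow_left₀ (norm_nonneg _) (hdiam u hu (x k) hxk) 2
  have hb2 : ‖y k - u‖^2 ≤ D^2 :=
    pow_le_pow_left₀ (norm_nonneg _) (hdiam (y k) hyk u hu) 2
  have k1 : A (k+1) * (m/2*(mu^2*‖u - x k‖^2)) ≤ A (k+1) * (m/2*(mu^2*D^2)) := by
    have hc : (0:ℝ) ≤ A (k+1) * (m/2) * mu^2 := by positivity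
    linarith [mul_le_mul_of_nonneg_left hb1 hc]
  have k2 : A k * (m/2*(mu^2*‖y k - u‖^2)) ≤ A k * (m/2*(mu^2*D^2)) := by
    have hc : (0:ℝ) ≤ A k * (m/2) * mu^2 := by positivity
    linarith [mul_le_mul_of_nonneg_left hb2 hc]
  have k3 : a k * (m/2*(lam^2*‖y k - u‖^2)) ≤ a k * (m/2*(lam^2*D^2)) := by
    have hc : (0:ℝ) ≤ a k * (m/2) * lam^2 := by positivity
    linarith [mul_le_mul_of_nonneg_left hb2 hc]
  have csum : A (k+1) * (m/2*(mu^2*D^2)) + A k * (m/2*(mu^2*D^2))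
      + a k * (m/2*(lam^2*D^2)) = m/2 * a k * D^2 := by
    rw [hlamd, hmud, hAeq]
    field_simp
    ring
  -- final combination
  have Efu : A (k+1) * f u = A k * f u + a k * f u := by rw [hAeq]; ring
  have Ehu : A (k+1) * h u = A k * h u + a k * h u := by rw [hAeq]; ring
  rw [hygy]
  linarith [Lfinal, S1, S7, S3, B2, S4, S5, S6, q1, q2, q3, q4, q5, q6, E5, Efw,
    Efu, Ehu, k1, k2, k3, csum, hAeq]
end

section
/- In the AC-ACG setting, for every k ≥ 0 with C_k > 0.9·M_k (a bad iteration) and every u ∈ s: 0 ≤ η_k(u) − η_{k+1}(u) + (m/2)·a_k·D² + ((1 − γ)/(2·γ))·D², where η_j(u) := A_j·(φ(y_j) − φ(u)) + (1/2)·‖u − x_j‖². -/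
set_option maxHeartbeats 1000000


lemma comb_norm_sq {E : Type*} [NormedAddCommGroup E] [InnerProductSpace ℝ E]
    (t : ℝ) (p q : E) :
    ‖t•p + (1-t)•q‖^2 = t*‖p‖^2 + (1-t)*‖q‖^2 - t*(1-t)*‖p-q‖^2 := by
  have h1 : ∀ w : E, ‖w‖^2 = (inner ℝ w w : ℝ) := fun w => (real_inner_self_eq_norm_sq w).symm
  simp only [h1, inner_add_left, inner_add_right, inner_sub_left, inner_sub_right,
    real_inner_smul_left, real_inner_smul_right, real_inner_comm q p]
  ring


lemma descent_lemma {E : Type*} [NormedAddCommGroup E] [InnerProductSpace ℝ E]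
    {s : Set E} (hs : Convex ℝ s)
    (f : E → ℝ) (f' : E → E) (hf : ∀ z : E, HasFDerivAt f ((innerSL ℝ) (f' z)) z)
    (Mbar : ℝ) (hlip : ∀ u ∈ s, ∀ u' ∈ s, ‖f' u - f' u'‖ ≤ Mbar * ‖u - u'‖)
    {x w : E} (hx : x ∈ s) (hw : w ∈ s) :
    f w ≤ f x + (inner ℝ (f' x) (w - x) : ℝ) + Mbar/2 * ‖w - x‖^2 := by
  set v := w - x with hv
  set H : ℝ → ℝ := fun t => Mbar/2*‖v‖^2*t^2 + t*(inner ℝ (f' x) v : ℝ) + f x - f (x + t•v) with hH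
  have hc : ∀ t : ℝ, HasDerivAt (fun t : ℝ => x + t•v) v t := by
    intro t
    simpa using ((hasDerivAt_id t).smul_const v).const_add x
  have hfd : ∀ t : ℝ, HasDerivAt (fun t : ℝ => f (x + t•v)) ((inner ℝ (f' (x + t•v)) v : ℝ)) t := by
    intro t
    have := (hf (x + t•v)).comp_hasDerivAt t (hc t)
    exact this
  have hHd : ∀ t : ℝ, HasDerivAt H (Mbar*‖v‖^2*t + (inner ℝ (f' x) v : ℝ) - (inner ℝ (f' (x + t•v)) v : ℝ)) t := by
    intro t
    have h1 : HasDerivAt (fun t : ℝ => Mbar/2*‖v‖^2*t^2) (Mbar/2*‖v‖^2*(2*t)) t := by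
      simpa using (hasDerivAt_pow 2 t).const_mul (Mbar/2*‖v‖^2)
    have h2 : HasDerivAt (fun t : ℝ => t*(inner ℝ (f' x) v : ℝ)) ((inner ℝ (f' x) v : ℝ)) t := by
      simpa using (hasDerivAt_id t).mul_const ((inner ℝ (f' x) v : ℝ))
    have := ((h1.add h2).add_const (f x)).sub (hfd t)
    refine this.congr_deriv ?_
    ring
  have hmono : MonotoneOn H (Set.Icc 0 1) := by
    apply monotoneOn_of_deriv_nonneg (convex_Icc 0 1)
    · exact (fun t _ => ((hHd t).differentiableAt.continuousAt.continuousWithinAt))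
    · intro t ht
      exact ((hHd t).differentiableAt.differentiableWithinAt)
    · intro t ht
      rw [interior_Icc] at ht
      rw [(hHd t).deriv]
      have hmem : x + t•v ∈ s := by
        have : x + t•v = (1-t)•x + t•w := by rw [hv]; module
        rw [this]
        exact hs hx hw (by linarith [ht.2]) (le_of_lt ht.1) (by ring)
      have h3 : (inner ℝ (f' (x + t•v)) v : ℝ) - (inner ℝ (f' x) v : ℝ) ≤ Mbar*t*‖v‖^2 := by
        have h4 : (inner ℝ (f' (x + t•v)) v : ℝ) - (inner ℝ (f' x) v : ℝ)
            = (inner ℝ (f' (x + t•v)) v : ℝ) - (inner ℝ (f' x) v : ℝ) := rfl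
        have h5 : (inner ℝ (f' (x + t•v)) v : ℝ) - (inner ℝ (f' x) v : ℝ)
            = (inner ℝ (f' (x + t•v) - f' x) v : ℝ) := by rw [inner_sub_left]
        rw [h5]
        calc (inner ℝ (f' (x + t•v) - f' x) v : ℝ) ≤ ‖f' (x + t•v) - f' x‖ * ‖v‖ :=
              real_inner_le_norm _ _
          _ ≤ (Mbar * ‖x + t•v - x‖) * ‖v‖ := by
              apply mul_le_mul_of_nonneg_right _ (norm_nonneg v)
              exact hlip _ hmem _ hx
          _ = Mbar*t*‖v‖^2 := by
              rw [add_sub_cancel_left, norm_smul, Real.norm_eq_abs, abs_of_pos ht.1]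
              ring
      nlinarith [h3]
  have h01 := hmono (Set.mem_Icc.mpr ⟨le_refl 0, zero_le_one⟩) (Set.mem_Icc.mpr ⟨zero_le_one, le_refl 1⟩) zero_le_one
  have hH0 : H 0 = 0 := by simp [hH]
  have hH1 : H 1 = Mbar/2*‖v‖^2 + (inner ℝ (f' x) v : ℝ) + f x - f w := by
    have hxv : x + v = w := by rw [hv]; abel
    simp [hH, hxv]
  rw [hH0, hH1] at h01
  linarith

lemma strong_min_s12 {E : Type*} [NormedAddCommGroup E] [InnerProductSpace ℝ E]
    {s : Set E} (hs : Convex ℝ s) (ψ : E → ℝ)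
    (hψ : ∀ w ∈ s, ∀ u ∈ s, ∀ t : ℝ, 0 ≤ t → t ≤ 1 →
      ψ ((1-t)•w + t•u) ≤ (1-t)*ψ w + t*ψ u)
    {xk xp : E} (hxp : xp ∈ s)
    (hmin : ∀ u ∈ s, ψ xp + 1/2*‖xp - xk‖^2 ≤ ψ u + 1/2*‖u - xk‖^2) :
    ∀ u ∈ s, ψ xp + 1/2*‖xp - xk‖^2 + 1/2*‖u - xp‖^2 ≤ ψ u + 1/2*‖u - xk‖^2 := by
  intro u hu
  have key : ∀ t : ℝ, 0 < t → t ≤ 1 →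
      ψ xp + 1/2*‖xp - xk‖^2 + (1-t)/2*‖u - xp‖^2 ≤ ψ u + 1/2*‖u - xk‖^2 := by
    intro t ht0 ht1
    set ut := (1-t)•xp + t•u with hut
    have hus : ut ∈ s := hs hxp hu (by linarith) (le_of_lt ht0) (by ring)
    have h1 := hmin ut hus
    have h2 := hψ xp hxp u hu t (le_of_lt ht0) ht1
    have h3 : ‖ut - xk‖^2 = (1-t)*‖xp - xk‖^2 + t*‖u - xk‖^2 - (1-t)*t*‖u - xp‖^2 := by
      have he : ut - xk = (1-t)•(xp - xk) + (1-(1-t))•(u - xk) := by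
        rw [hut]; module
      rw [he, comb_norm_sq]
      have he2 : xp - xk - (u - xk) = xp - u := by abel
      rw [he2, norm_sub_rev xp u]
      ring
    have h4 : t*(ψ xp + 1/2*‖xp - xk‖^2 + (1-t)/2*‖u - xp‖^2) ≤ t*(ψ u + 1/2*‖u - xk‖^2) := by
      nlinarith [h1, h2, h3]
    exact le_of_mul_le_mul_left (by linarith [h4]) ht0
  apply le_of_forall_pos_le_add
  intro ε hε
  set c := ‖u - xp‖^2 with hc
  have hcnn : 0 ≤ c := by positivity
  have ht0 : (0:ℝ) < min 1 (2*ε/(c+1)) := by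
    apply lt_min one_pos
    positivity
  have ht1 : min 1 (2*ε/(c+1)) ≤ 1 := min_le_left _ _
  have hk := key _ ht0 ht1
  have htc : (min 1 (2*ε/(c+1)))/2*c ≤ ε := by
    have h5 : min 1 (2*ε/(c+1)) ≤ 2*ε/(c+1) := min_le_right _ _
    have h6 : (0:ℝ) < c + 1 := by linarith
    have h8 : 2*ε/(c+1)*(c+1) = 2*ε := by field_simp
    nlinarith [mul_le_mul_of_nonneg_right h5 hcnn, h8, hε, hcnn]
  nlinarith [hk, htc]



/-- Lemma 3(b): potential inequality at bad iterations. -/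
theorem stmt12 {E : Type*} [NormedAddCommGroup E] [InnerProductSpace ℝ E]
    (s : Set E) (hs : Convex ℝ s) (hsne : s.Nonempty)
    (D : ℝ) (hD : 0 < D) (hdiam : ∀ u ∈ s, ∀ u' ∈ s, ‖u - u'‖ ≤ D)
    (f : E → ℝ) (f' : E → E) (hf : ∀ z : E, HasFDerivAt f ((innerSL ℝ) (f' z)) z)
    (m Mbar : ℝ) (hm : 0 ≤ m) (hMbar : 0 < Mbar)
    (hlower : ∀ u ∈ s, ∀ u' ∈ s,
      -(m / 2) * ‖u - u'‖ ^ 2 ≤ f u - f u' - (inner ℝ (f' u') (u - u') : ℝ))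
    (hlip : ∀ u ∈ s, ∀ u' ∈ s, ‖f' u - f' u'‖ ≤ Mbar * ‖u - u'‖)
    (h : E → ℝ) (hh : ConvexOn ℝ s h)
    (γ M α : ℝ) (hγ0 : 0 < γ) (hγ1 : γ < 1) (hMM : Mbar ≤ M)
    (hα : α = 0.9 / 8 * (1 + 1 / (0.9 * γ))⁻¹)
    (x y yg xt v : ℕ → E) (A a Mseq C Cavg : ℕ → ℝ)
    (hx0 : x 0 ∈ s) (hy0 : y 0 = x 0) (hA0 : A 0 = 0) (hM0 : Mseq 0 = γ * M)
    (ha : ∀ k, a k = (1 + Real.sqrt (1 + 4 * Mseq k * A k)) / (2 * Mseq k))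
    (hA : ∀ k, A (k + 1) = A k + a k)
    (hxt : ∀ k, xt k = (A (k + 1))⁻¹ • (A k • y k + a k • x k))
    (hyg_mem : ∀ k, yg (k + 1) ∈ s)
    (hyg_min : ∀ k, ∀ u ∈ s,
      f (xt k) + (inner ℝ (f' (xt k)) (yg (k + 1) - xt k) : ℝ) + h (yg (k + 1))
          + Mseq k / 2 * ‖yg (k + 1) - xt k‖ ^ 2
        ≤ f (xt k) + (inner ℝ (f' (xt k)) (u - xt k) : ℝ) + h u
          + Mseq k / 2 * ‖u - xt k‖ ^ 2)
    (hx_mem : ∀ k, x (k + 1) ∈ s)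
    (hx_min : ∀ k, ∀ u ∈ s,
      a k * (f (xt k) + (inner ℝ (f' (xt k)) (x (k + 1) - xt k) : ℝ) + h (x (k + 1)))
          + 1 / 2 * ‖x (k + 1) - x k‖ ^ 2
        ≤ a k * (f (xt k) + (inner ℝ (f' (xt k)) (u - xt k) : ℝ) + h u)
          + 1 / 2 * ‖u - x k‖ ^ 2)
    (hv : ∀ k, v (k + 1) = Mseq k • (xt k - yg (k + 1)) + f' (yg (k + 1)) - f' (xt k))
    (hne : ∀ k, yg (k + 1) ≠ xt k)
    (hC : ∀ k, C k = max
      (2 * (f (yg (k + 1)) - (f (xt k) + (inner ℝ (f' (xt k)) (yg (k + 1) - xt k) : ℝ)))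
        / ‖yg (k + 1) - xt k‖ ^ 2)
      (‖f' (yg (k + 1)) - f' (xt k)‖ / ‖yg (k + 1) - xt k‖))
    (hCavg : ∀ k, Cavg k = (1 / ((k : ℝ) + 1)) * ∑ j ∈ Finset.range (k + 1), C j)
    (hMsucc : ∀ k, Mseq (k + 1) = max (Cavg k / α) (γ * M))
    (hy : ∀ k, y (k + 1) =
      if 0.9 * Mseq k < C k then (A (k + 1))⁻¹ • (A k • y k + a k • x (k + 1))
      else yg (k + 1))
     :
    ∀ k : ℕ, 0.9 * Mseq k < C k → ∀ u ∈ s,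
      0 ≤ (A k * ((f (y k) + h (y k)) - (f u + h u)) + 1 / 2 * ‖u - x k‖ ^ 2)
          - (A (k + 1) * ((f (y (k + 1)) + h (y (k + 1))) - (f u + h u))
              + 1 / 2 * ‖u - x (k + 1)‖ ^ 2)
          + m / 2 * a k * D ^ 2 + (1 - γ) / (2 * γ) * D ^ 2 := by
  intro k hbad u hu
  have hMpos : (0:ℝ) < M := lt_of_lt_of_le hMbar hMM
  have hγM : 0 < γ * M := mul_pos hγ0 hMpos
  have hMk : ∀ j, γ * M ≤ Mseq j := by
    intro j
    cases j with
    | zero => rw [hM0]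
    | succ n => rw [hMsucc n]; exact le_max_right _ _
  have hMkpos : ∀ j, 0 < Mseq j := fun j => lt_of_lt_of_le hγM (hMk j)
  have hapos : ∀ j, 0 < a j := by
    intro j; rw [ha j]
    apply div_pos _ (by linarith [hMkpos j])
    have := Real.sqrt_nonneg (1 + 4 * Mseq j * A j); linarith
  have hAnn : ∀ j, 0 ≤ A j := by
    intro j; induction j with
    | zero => rw [hA0]
    | succ n ih => rw [hA n]; linarith [hapos n]
  have hAp : ∀ j, 0 < A (j+1) := fun j => by rw [hA j]; linarith [hapos j, hAnn j]
  have hMa : ∀ j, Mseq j * (a j)^2 = A (j+1) := by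
    intro j
    have h4 : (0:ℝ) ≤ 1 + 4 * Mseq j * A j := by
      have := mul_nonneg (le_of_lt (hMkpos j)) (hAnn j); nlinarith
    have hr := Real.sq_sqrt h4
    have hMne : Mseq j ≠ 0 := ne_of_gt (hMkpos j)
    rw [hA j, ha j]
    field_simp
    rw [show Mseq j * 4 * A j = 4 * Mseq j * A j by ring]
    nlinarith [hr]
  have sum1 : ∀ j, A j / A (j+1) + a j / A (j+1) = 1 := by
    intro j
    have h1 := hA j
    rw [← add_div, ← h1, div_self (ne_of_gt (hAp j))]
  have hinv : ∀ (j:ℕ) (p q : E), (A (j+1))⁻¹ • (A j • p + a j • q)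
      = (A j / A (j+1)) • p + (a j / A (j+1)) • q := by
    intro j p q
    rw [smul_add, smul_smul, smul_smul, div_eq_inv_mul, div_eq_inv_mul]
  have hxys : ∀ j, x j ∈ s ∧ y j ∈ s := by
    intro j; induction j with
    | zero => exact ⟨hx0, by rw [hy0]; exact hx0⟩
    | succ n ih =>
      refine ⟨hx_mem n, ?_⟩
      rw [hy n]
      split_ifs with hc
      · rw [hinv n]
        exact hs ih.2 (hx_mem n) (div_nonneg (hAnn n) (le_of_lt (hAp n)))
          (div_nonneg (le_of_lt (hapos n)) (le_of_lt (hAp n))) (sum1 n)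
      · exact hyg_mem n
  have hxts : ∀ j, xt j ∈ s := by
    intro j; rw [hxt j, hinv j]
    exact hs (hxys j).2 (hxys j).1 (div_nonneg (hAnn j) (le_of_lt (hAp j)))
      (div_nonneg (le_of_lt (hapos j)) (le_of_lt (hAp j))) (sum1 j)
  have hD2 : ∀ p ∈ s, ∀ q ∈ s, ‖p - q‖^2 ≤ D^2 := by
    intro p hp q hq
    have h1 := hdiam p hp q hq
    nlinarith [norm_nonneg (p - q)]
  have hApd : A (k+1) = A k + a k := hA k
  have hApne : A (k+1) ≠ 0 := ne_of_gt (hAp k)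
  set t1 := A k / A (k+1) with ht1
  set t2 := 1 - t1 with ht2
  have ht2' : t2 = a k / A (k+1) := by
    rw [ht2, ht1]; field_simp; linarith
  have ht1nn : 0 ≤ t1 := div_nonneg (hAnn k) (le_of_lt (hAp k))
  have ht2nn : 0 ≤ t2 := by rw [ht2']; exact div_nonneg (le_of_lt (hapos k)) (le_of_lt (hAp k))
  have h12 : t1 + t2 = 1 := by rw [ht2]; ring
  have et1 : A (k+1) * t1 = A k := by rw [ht1]; field_simp
  have et2 : A (k+1) * t2 = a k := by rw [ht2']; field_simp
  have eAkt2 : A k * t2 = a k * t1 := by rw [ht2', ht1]; field_simp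
  have hAkt2 : A k * t2^2 = a k * (t1 * t2) := by rw [ht2', ht1]; field_simp
  have hyneq : y (k+1) = t1 • y k + t2 • x (k+1) := by
    rw [hy k, if_pos hbad, hinv k, ← ht1, ← ht2']
  have hXeq : xt k = t1 • y k + t2 • x k := by
    rw [hxt k, hinv k, ← ht1, ← ht2']
  have e1 : y (k+1) - xt k = t2 • (x (k+1) - x k) := by
    rw [hyneq, hXeq]; module
  have e2 : y k - xt k = t2 • (y k - x k) := by
    rw [hXeq, ht2]; module
  have e3 : u - xt k = t1 • (u - y k) + t2 • (u - x k) := by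
    rw [hXeq, ht2]; module
  have n1 : ‖y (k+1) - xt k‖^2 = t2^2 * ‖x (k+1) - x k‖^2 := by
    rw [e1, norm_smul, Real.norm_eq_abs, abs_of_nonneg ht2nn, mul_pow]
  have n2 : ‖y k - xt k‖^2 = t2^2 * ‖y k - x k‖^2 := by
    rw [e2, norm_smul, Real.norm_eq_abs, abs_of_nonneg ht2nn, mul_pow]
  have n3 : ‖u - xt k‖^2 = t1 * ‖u - y k‖^2 + t2 * ‖u - x k‖^2 - t1*t2*‖y k - x k‖^2 := by
    have e3' : u - xt k = t1 • (u - y k) + (1 - t1) • (u - x k) := by rw [e3, ht2]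
    rw [e3', comb_norm_sq]
    have he2 : u - y k - (u - x k) = x k - y k := by abel
    rw [he2, norm_sub_rev (x k) (y k), ← ht2]
  have hMne : Mseq k ≠ 0 := ne_of_gt (hMkpos k)
  have hak2 : (a k)^2 = A (k+1) / Mseq k := by
    rw [eq_div_iff hMne]
    linear_combination hMa k
  have e6 : A (k+1) * t2^2 = 1 / Mseq k := by
    rw [ht2', div_pow, hak2]
    field_simp
  have hYs : y k ∈ s := (hxys k).2
  have hKs : x k ∈ s := (hxys k).1
  have hPs : x (k+1) ∈ s := hx_mem k
  have hXs : xt k ∈ s := hxts k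
  have hYns : y (k+1) ∈ s := by rw [hyneq]; exact hs hYs hPs ht1nn ht2nn h12
  -- W1: strong minimality
  have hconv : ∀ w ∈ s, ∀ u' ∈ s, ∀ t : ℝ, 0 ≤ t → t ≤ 1 →
      a k * (f (xt k) + (inner ℝ (f' (xt k)) ((1-t)•w + t•u' - xt k) : ℝ) + h ((1-t)•w + t•u'))
        ≤ (1-t) * (a k * (f (xt k) + (inner ℝ (f' (xt k)) (w - xt k) : ℝ) + h w))
          + t * (a k * (f (xt k) + (inner ℝ (f' (xt k)) (u' - xt k) : ℝ) + h u')) := by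
    intro w hw u' hu' t ht0 ht1'
    have hin : (inner ℝ (f' (xt k)) ((1-t)•w + t•u' - xt k) : ℝ)
        = (1-t) * (inner ℝ (f' (xt k)) (w - xt k) : ℝ)
          + t * (inner ℝ (f' (xt k)) (u' - xt k) : ℝ) := by
      have hv2 : (1-t)•w + t•u' - xt k = (1-t)•(w - xt k) + t•(u' - xt k) := by module
      rw [hv2, inner_add_right, real_inner_smul_right, real_inner_smul_right]
    have hhh := hh.2 hw hu' (by linarith : (0:ℝ) ≤ 1 - t) ht0 (by ring)
    simp only [smul_eq_mul] at hhh
    have hmul := mul_le_mul_of_nonneg_left hhh (le_of_lt (hapos k))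
    rw [hin]
    linarith [hmul]
  have W1 : a k * (f (xt k) + (inner ℝ (f' (xt k)) (x (k+1) - xt k) : ℝ) + h (x (k+1)))
      + 1/2*‖x (k+1) - x k‖^2 + 1/2*‖u - x (k+1)‖^2
      ≤ a k * (f (xt k) + (inner ℝ (f' (xt k)) (u - xt k) : ℝ) + h u) + 1/2*‖u - x k‖^2 :=
    strong_min_s12 hs (fun w => a k * (f (xt k) + (inner ℝ (f' (xt k)) (w - xt k) : ℝ) + h w))
      hconv hPs (fun u' hu' => hx_min k u' hu') u hu
  -- W2: convexity of h
  have W2 : A (k+1) * h (y (k+1)) ≤ A k * h (y k) + a k * h (x (k+1)) := by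
    have hhh := hh.2 hYs hPs ht1nn ht2nn h12
    rw [← hyneq] at hhh
    have h2 := mul_le_mul_of_nonneg_left hhh (le_of_lt (hAp k))
    calc A (k+1) * h (y (k+1)) ≤ A (k+1) * (t1 * h (y k) + t2 * h (x (k+1))) := h2
      _ = (A (k+1) * t1) * h (y k) + (A (k+1) * t2) * h (x (k+1)) := by ring
      _ = A k * h (y k) + a k * h (x (k+1)) := by rw [et1, et2]
  -- W3: affinity
  have hv3 : A (k+1) • (y (k+1) - xt k) = A k • (y k - xt k) + a k • (x (k+1) - xt k) := by
    have e5 : x (k+1) - xt k = (x (k+1) - x k) - t1 • (y k - x k) := by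
      rw [hXeq, ht2]; module
    rw [e1, e2, e5, smul_smul, smul_smul, et2, eAkt2]
    module
  have W3 : A (k+1) * (inner ℝ (f' (xt k)) (y (k+1) - xt k) : ℝ)
      = A k * (inner ℝ (f' (xt k)) (y k - xt k) : ℝ)
        + a k * (inner ℝ (f' (xt k)) (x (k+1) - xt k) : ℝ) := by
    have hcon := congrArg (fun w : E => (inner ℝ (f' (xt k)) w : ℝ)) hv3
    simpa [inner_add_right, real_inner_smul_right] using hcon
  -- W4: descent
  have hd := descent_lemma hs f f' hf Mbar hlip hXs hYns
  have hMb2 : Mbar / (2 * Mseq k) ≤ 1 / (2 * γ) := by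
    have h1 : γ * Mbar ≤ Mseq k :=
      le_trans (mul_le_mul_of_nonneg_left hMM (le_of_lt hγ0)) (hMk k)
    have h2 : (0:ℝ) < 2 * Mseq k := by linarith [hMkpos k]
    have h3 : (0:ℝ) < 2 * γ := by linarith
    exact (div_le_div_iff₀ h2 h3).mpr (by nlinarith)
  have hN1 : ‖x (k+1) - x k‖^2 ≤ D^2 := hD2 _ hPs _ hKs
  have hN1nn : (0:ℝ) ≤ ‖x (k+1) - x k‖^2 := by positivity
  have w4a : A (k+1) * f (y (k+1)) ≤ A (k+1) * (f (xt k)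
      + (inner ℝ (f' (xt k)) (y (k+1) - xt k) : ℝ) + Mbar/2*‖y (k+1) - xt k‖^2) :=
    mul_le_mul_of_nonneg_left hd (le_of_lt (hAp k))
  have w4b : A (k+1) * (Mbar/2*‖y (k+1) - xt k‖^2) = Mbar/(2*Mseq k) * ‖x (k+1) - x k‖^2 := by
    rw [n1]
    linear_combination (Mbar/2 * ‖x (k+1) - x k‖^2) * e6
  have w4c : Mbar/(2*Mseq k) * ‖x (k+1) - x k‖^2 ≤ 1/(2*γ) * ‖x (k+1) - x k‖^2 :=
    mul_le_mul_of_nonneg_right hMb2 hN1nn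
  have w4d : 1/(2*γ) * ‖x (k+1) - x k‖^2
      = 1/2 * ‖x (k+1) - x k‖^2 + (1-γ)/(2*γ) * ‖x (k+1) - x k‖^2 := by
    field_simp
    ring
  have hcoef : (0:ℝ) ≤ (1-γ)/(2*γ) := div_nonneg (by linarith) (by linarith)
  have w4e : (1-γ)/(2*γ) * ‖x (k+1) - x k‖^2 ≤ (1-γ)/(2*γ) * D^2 :=
    mul_le_mul_of_nonneg_left hN1 hcoef
  have W4 : A (k+1) * f (y (k+1)) ≤ A (k+1) * f (xt k)
      + A (k+1) * (inner ℝ (f' (xt k)) (y (k+1) - xt k) : ℝ)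
      + 1/2 * ‖x (k+1) - x k‖^2 + (1-γ)/(2*γ) * D^2 := by
    linarith [w4a, w4b, w4c, w4d, w4e]
  -- W5: lower curvature
  have LY := hlower (y k) hYs (xt k) hXs
  have LU := hlower u hu (xt k) hXs
  have LY' : (inner ℝ (f' (xt k)) (y k - xt k) : ℝ)
      ≤ f (y k) - f (xt k) + m/2 * (t2^2 * ‖y k - x k‖^2) := by
    rw [← n2]; linarith [LY]
  have LU' : (inner ℝ (f' (xt k)) (u - xt k) : ℝ)
      ≤ f u - f (xt k) + m/2 * (t1 * ‖u - y k‖^2 + t2 * ‖u - x k‖^2 - t1*t2*‖y k - x k‖^2) := by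
    rw [← n3]; linarith [LU]
  have LYm := mul_le_mul_of_nonneg_left LY' (hAnn k)
  have LUm := mul_le_mul_of_nonneg_left LU' (le_of_lt (hapos k))
  have hcanc : A k * (m/2 * (t2^2 * ‖y k - x k‖^2)) = a k * (m/2 * (t1*t2*‖y k - x k‖^2)) := by
    linear_combination (m/2 * ‖y k - x k‖^2) * hAkt2
  have hN4 : ‖u - y k‖^2 ≤ D^2 := hD2 _ hu _ hYs
  have hN3 : ‖u - x k‖^2 ≤ D^2 := hD2 _ hu _ hKs
  have tb1 : 0 ≤ m/2 * (a k * t1) * (D^2 - ‖u - y k‖^2) :=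
    mul_nonneg (mul_nonneg (by linarith) (mul_nonneg (le_of_lt (hapos k)) ht1nn)) (by linarith)
  have tb2 : 0 ≤ m/2 * (a k * t2) * (D^2 - ‖u - x k‖^2) :=
    mul_nonneg (mul_nonneg (by linarith) (mul_nonneg (le_of_lt (hapos k)) ht2nn)) (by linarith)
  have hDsum : m/2 * (a k * t1) * D^2 + m/2 * (a k * t2) * D^2 = m/2 * a k * D^2 := by
    linear_combination (m/2 * a k * D^2) * h12
  have W5 : A k * (inner ℝ (f' (xt k)) (y k - xt k) : ℝ)
      + a k * (inner ℝ (f' (xt k)) (u - xt k) : ℝ)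
      ≤ A k * (f (y k) - f (xt k)) + a k * (f u - f (xt k)) + m/2 * a k * D^2 := by
    linarith [LYm, LUm, hcanc, tb1, tb2, hDsum]
  -- final assembly
  have hsplit : A (k+1) * (f u + h u) = A k * (f u + h u) + a k * (f u + h u) := by
    rw [hApd]; ring
  have hsplit2 : A (k+1) * f (xt k) = A k * f (xt k) + a k * f (xt k) := by
    rw [hApd]; ring
  linarith [W1, W2, W3, W4, W5, hsplit, hsplit2]
end

section
/- In the AC-ACG setting, for every k ≥ 0 the residual v_{k+1} is a generalized stationarity residual at y^g_{k+1}: for every u ∈ s, h(u) ≥ h(y^g_{k+1}) + ⟨v_{k+1} − ∇f(y^g_{k+1}), u − y^g_{k+1}⟩ (i.e., v_{k+1} ∈ ∇f(y^g_{k+1}) + ∂(h + indicator of s)(y^g_{k+1})). -/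
set_option maxHeartbeats 1000000 in
/-- Theorem 1(a): v_{k+1} is a generalized stationarity residual at y^g_{k+1}. -/
theorem stmt14 {E : Type*} [NormedAddCommGroup E] [InnerProductSpace ℝ E]
    (s : Set E) (hs : Convex ℝ s) (hsne : s.Nonempty)
    (D : ℝ) (hD : 0 < D) (hdiam : ∀ u ∈ s, ∀ u' ∈ s, ‖u - u'‖ ≤ D)
    (f : E → ℝ) (f' : E → E) (hf : ∀ z : E, HasFDerivAt f ((innerSL ℝ) (f' z)) z)
    (m Mbar : ℝ) (hm : 0 ≤ m) (hMbar : 0 < Mbar)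
    (hlower : ∀ u ∈ s, ∀ u' ∈ s,
      -(m / 2) * ‖u - u'‖ ^ 2 ≤ f u - f u' - (inner ℝ (f' u') (u - u') : ℝ))
    (hlip : ∀ u ∈ s, ∀ u' ∈ s, ‖f' u - f' u'‖ ≤ Mbar * ‖u - u'‖)
    (h : E → ℝ) (hh : ConvexOn ℝ s h)
    (γ M α : ℝ) (hγ0 : 0 < γ) (hγ1 : γ < 1) (hMM : Mbar ≤ M)
    (hα : α = 0.9 / 8 * (1 + 1 / (0.9 * γ))⁻¹)
    (x y yg xt v : ℕ → E) (A a Mseq C Cavg : ℕ → ℝ)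
    (hx0 : x 0 ∈ s) (hy0 : y 0 = x 0) (hA0 : A 0 = 0) (hM0 : Mseq 0 = γ * M)
    (ha : ∀ k, a k = (1 + Real.sqrt (1 + 4 * Mseq k * A k)) / (2 * Mseq k))
    (hA : ∀ k, A (k + 1) = A k + a k)
    (hxt : ∀ k, xt k = (A (k + 1))⁻¹ • (A k • y k + a k • x k))
    (hyg_mem : ∀ k, yg (k + 1) ∈ s)
    (hyg_min : ∀ k, ∀ u ∈ s,
      f (xt k) + (inner ℝ (f' (xt k)) (yg (k + 1) - xt k) : ℝ) + h (yg (k + 1))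
          + Mseq k / 2 * ‖yg (k + 1) - xt k‖ ^ 2
        ≤ f (xt k) + (inner ℝ (f' (xt k)) (u - xt k) : ℝ) + h u
          + Mseq k / 2 * ‖u - xt k‖ ^ 2)
    (hx_mem : ∀ k, x (k + 1) ∈ s)
    (hx_min : ∀ k, ∀ u ∈ s,
      a k * (f (xt k) + (inner ℝ (f' (xt k)) (x (k + 1) - xt k) : ℝ) + h (x (k + 1)))
          + 1 / 2 * ‖x (k + 1) - x k‖ ^ 2
        ≤ a k * (f (xt k) + (inner ℝ (f' (xt k)) (u - xt k) : ℝ) + h u)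
          + 1 / 2 * ‖u - x k‖ ^ 2)
    (hv : ∀ k, v (k + 1) = Mseq k • (xt k - yg (k + 1)) + f' (yg (k + 1)) - f' (xt k))
    (hne : ∀ k, yg (k + 1) ≠ xt k)
    (hC : ∀ k, C k = max
      (2 * (f (yg (k + 1)) - (f (xt k) + (inner ℝ (f' (xt k)) (yg (k + 1) - xt k) : ℝ)))
        / ‖yg (k + 1) - xt k‖ ^ 2)
      (‖f' (yg (k + 1)) - f' (xt k)‖ / ‖yg (k + 1) - xt k‖))
    (hCavg : ∀ k, Cavg k = (1 / ((k : ℝ) + 1)) * ∑ j ∈ Finset.range (k + 1), C j)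
    (hMsucc : ∀ k, Mseq (k + 1) = max (Cavg k / α) (γ * M))
    (hy : ∀ k, y (k + 1) =
      if 0.9 * Mseq k < C k then (A (k + 1))⁻¹ • (A k • y k + a k • x (k + 1))
      else yg (k + 1))
     :
    ∀ k : ℕ, ∀ u ∈ s,
      h u ≥ h (yg (k + 1)) +
        (inner ℝ (v (k + 1) - f' (yg (k + 1))) (u - yg (k + 1)) : ℝ) := by

  intro k u hu
  have hg : yg (k+1) ∈ s := hyg_mem k
  set g := yg (k+1) with hgdef
  set z := xt k with hzdef
  set Mk := Mseq k with hMkdef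
  set p := f' z with hpdef
  set B : ℝ := (inner ℝ p (u - g) : ℝ) + h u - h g + Mk * (inner ℝ (g - z) (u - g) : ℝ)
    with hBdef
  set Cc : ℝ := Mk / 2 * ‖u - g‖ ^ 2 with hCcdef
  have key : ∀ t : ℝ, 0 < t → t ≤ 1 → 0 ≤ B + t * Cc := by
    intro t ht0 ht1
    set ut := (1 - t) • g + t • u with hutdef
    have hut_mem : ut ∈ s := hs hg hu (by linarith) ht0.le (by ring)
    have hconv : h ut ≤ (1 - t) * h g + t * h u := hh.2 hg hu (by linarith) ht0.le (by ring)
    have hmin := hyg_min k ut hut_mem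
    have hut_eq : ut - z = (g - z) + t • (u - g) := by
      rw [hutdef]
      module
    have hnorm : ‖ut - z‖ ^ 2
        = ‖g - z‖ ^ 2 + 2 * (t * (inner ℝ (g - z) (u - g) : ℝ)) + t ^ 2 * ‖u - g‖ ^ 2 := by
      rw [hut_eq, norm_add_sq_real, real_inner_smul_right, norm_smul,
        Real.norm_eq_abs, abs_of_pos ht0]
      ring
    have hinner : (inner ℝ p (ut - z) : ℝ) = (inner ℝ p (g - z) : ℝ) + t * (inner ℝ p (u - g) : ℝ) := by
      rw [hut_eq, inner_add_right, real_inner_smul_right]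
    rw [hinner, hnorm] at hmin
    have e2 : t * (B + t * Cc)
        = t * (inner ℝ p (u - g) : ℝ) + (t * h u - t * h g)
          + Mk * (t * (inner ℝ (g - z) (u - g) : ℝ)) + Mk / 2 * (t ^ 2 * ‖u - g‖ ^ 2) := by
      rw [hBdef, hCcdef]; ring
    have e1 : Mk / 2 * (‖g - z‖ ^ 2 + 2 * (t * (inner ℝ (g - z) (u - g) : ℝ))
          + t ^ 2 * ‖u - g‖ ^ 2)
        = Mk / 2 * ‖g - z‖ ^ 2 + Mk * (t * (inner ℝ (g - z) (u - g) : ℝ))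
          + Mk / 2 * (t ^ 2 * ‖u - g‖ ^ 2) := by ring
    have h1 : 0 ≤ t * (B + t * Cc) := by
      rw [e2]
      rw [e1] at hmin
      linarith [hconv, hmin]
    have h2 : t * 0 ≤ t * (B + t * Cc) := by rw [mul_zero]; exact h1
    exact le_of_mul_le_mul_left h2 ht0
  have hBnn : (0 : ℝ) ≤ B := by
    have h2 : ∀ ε : ℝ, 0 < ε → (0 : ℝ) ≤ B + ε := by
      intro ε hε
      have habs : (0 : ℝ) < |Cc| + 1 := by positivity
      set t := min 1 (ε / (|Cc| + 1)) with htdef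
      have ht0 : 0 < t := lt_min one_pos (by positivity)
      have ht1 : t ≤ 1 := min_le_left _ _
      have h3 : t * Cc ≤ ε := by
        have h4 : t * Cc ≤ t * |Cc| := by
          have := le_abs_self Cc
          nlinarith
        have h5 : t * |Cc| ≤ (ε / (|Cc| + 1)) * (|Cc| + 1) := by
          have ht2 : t ≤ ε / (|Cc| + 1) := min_le_right _ _
          have : (0:ℝ) ≤ |Cc| := abs_nonneg _
          nlinarith
        rw [div_mul_cancel₀ _ (ne_of_gt habs)] at h5
        linarith
      have := key t ht0 ht1
      linarith
    exact le_of_forall_pos_le_add h2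
  have hveq : v (k+1) - f' g = Mk • (z - g) - p := by
    rw [hv k]
    abel
  rw [ge_iff_le, hveq]
  have hinn : (inner ℝ (Mk • (z - g) - p) (u - g) : ℝ)
      = Mk * (inner ℝ (z - g) (u - g) : ℝ) - (inner ℝ p (u - g) : ℝ) := by
    rw [inner_sub_left, real_inner_smul_left]
  have hzg : (inner ℝ (z - g) (u - g) : ℝ) = -(inner ℝ (g - z) (u - g) : ℝ) := by
    rw [← inner_neg_left]; congr 1; abel
  rw [hinn, hzg]
  simp only [hBdef] at hBnn
  linarith
end
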